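/- arXiv:math/0610896 — 6 statements merged into one kernel-verified Lean document; each statement's English description precedes it below -/
import Mathlib

section
/- The Casimir element Ω = FE + (q^{2m}K^m + K^{−m})/((q^{2m} − 1)(q − q^{−1})) commutes with E, F, and K, and hence lies in the center of U_q(f_m(K)). -/
noncomputable section

inductive UqGen : Type
  | E : UqGen
  | F : UqGen
  | K : UqGen
  | Kinv : UqGen

def lpow {A : Type*} [Monoid A] (x xinv : A) (n : ℤ) : A :=
  if 0 ≤ n then x ^ n.toNat else xinv ^ (-n).toNat

open FreeAlgebra in
inductive UqRel (q : ℂ) (m : ℕ) : FreeAlgebra ℂ UqGen → FreeAlgebra ℂ UqGen → Prop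
  | KE : UqRel q m (ι ℂ UqGen.K * ι ℂ UqGen.E) (q ^ 2 • (ι ℂ UqGen.E * ι ℂ UqGen.K))
  | KF : UqRel q m (ι ℂ UqGen.K * ι ℂ UqGen.F) ((q ^ 2)⁻¹ • (ι ℂ UqGen.F * ι ℂ UqGen.K))
  | KKinv : UqRel q m (ι ℂ UqGen.K * ι ℂ UqGen.Kinv) 1
  | KinvK : UqRel q m (ι ℂ UqGen.Kinv * ι ℂ UqGen.K) 1
  | EF : UqRel q m (ι ℂ UqGen.E * ι ℂ UqGen.F - ι ℂ UqGen.F * ι ℂ UqGen.E)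
      ((q - q⁻¹)⁻¹ • ((ι ℂ UqGen.K) ^ m - (ι ℂ UqGen.Kinv) ^ m))

abbrev Uq (q : ℂ) (m : ℕ) : Type := RingQuot (UqRel q m)

def Egen (q : ℂ) (m : ℕ) : Uq q m := RingQuot.mkAlgHom ℂ (UqRel q m) (FreeAlgebra.ι ℂ UqGen.E)
def Fgen (q : ℂ) (m : ℕ) : Uq q m := RingQuot.mkAlgHom ℂ (UqRel q m) (FreeAlgebra.ι ℂ UqGen.F)
def Kgen (q : ℂ) (m : ℕ) : Uq q m := RingQuot.mkAlgHom ℂ (UqRel q m) (FreeAlgebra.ι ℂ UqGen.K)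
def Kinvgen (q : ℂ) (m : ℕ) : Uq q m := RingQuot.mkAlgHom ℂ (UqRel q m) (FreeAlgebra.ι ℂ UqGen.Kinv)

def Kzpow (q : ℂ) (m : ℕ) (n : ℤ) : Uq q m := lpow (Kgen q m) (Kinvgen q m) n

def Casimir (q : ℂ) (m : ℕ) : Uq q m :=
  Fgen q m * Egen q m +
    (((q ^ (2 * m) - 1) * (q - q⁻¹))⁻¹ * q ^ (2 * m)) • Kgen q m ^ m +
    ((q ^ (2 * m) - 1) * (q - q⁻¹))⁻¹ • Kinvgen q m ^ m


set_option maxHeartbeats 1000000 in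
example : True := trivial

set_option maxHeartbeats 1000000
set_option linter.unreachableTactic false
set_option linter.unusedTactic false

lemma hKE (q : ℂ) (m : ℕ) : Kgen q m * Egen q m = q ^ 2 • (Egen q m * Kgen q m) := by
  have := RingQuot.mkAlgHom_rel ℂ (UqRel.KE (q := q) (m := m))
  simpa [Egen, Kgen, map_mul] using this

lemma hKF (q : ℂ) (m : ℕ) : Kgen q m * Fgen q m = (q ^ 2)⁻¹ • (Fgen q m * Kgen q m) := by
  have := RingQuot.mkAlgHom_rel ℂ (UqRel.KF (q := q) (m := m))
  simpa [Fgen, Kgen, map_mul] using this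

lemma hKKinv (q : ℂ) (m : ℕ) : Kgen q m * Kinvgen q m = 1 := by
  have := RingQuot.mkAlgHom_rel ℂ (UqRel.KKinv (q := q) (m := m))
  simpa [Kinvgen, Kgen, map_mul] using this

lemma hKinvK (q : ℂ) (m : ℕ) : Kinvgen q m * Kgen q m = 1 := by
  have := RingQuot.mkAlgHom_rel ℂ (UqRel.KinvK (q := q) (m := m))
  simpa [Kinvgen, Kgen, map_mul] using this

lemma hEF (q : ℂ) (m : ℕ) : Egen q m * Fgen q m - Fgen q m * Egen q m
    = (q - q⁻¹)⁻¹ • (Kgen q m ^ m - Kinvgen q m ^ m) := by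
  have := RingQuot.mkAlgHom_rel ℂ (UqRel.EF (q := q) (m := m))
  simpa [Egen, Fgen, Kgen, Kinvgen, map_mul, map_sub, map_pow] using this

lemma hEKinv (q : ℂ) (m : ℕ) : Egen q m * Kinvgen q m = q ^ 2 • (Kinvgen q m * Egen q m) := by
  have h := congrArg (fun x => Kinvgen q m * x * Kinvgen q m) (hKE q m)
  simp only [mul_smul_comm, smul_mul_assoc] at h
  calc Egen q m * Kinvgen q m
      = (Kinvgen q m * Kgen q m) * Egen q m * Kinvgen q m := by rw [hKinvK, one_mul]
    _ = Kinvgen q m * (Kgen q m * Egen q m) * Kinvgen q m := by noncomm_ring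
    _ = q ^ 2 • (Kinvgen q m * (Egen q m * Kgen q m) * Kinvgen q m) := h
    _ = q ^ 2 • (Kinvgen q m * Egen q m * (Kgen q m * Kinvgen q m)) := by noncomm_ring
    _ = q ^ 2 • (Kinvgen q m * Egen q m) := by rw [hKKinv, mul_one]

lemma hFK (q : ℂ) (m : ℕ) (hq0 : q ≠ 0) :
    Fgen q m * Kgen q m = q ^ 2 • (Kgen q m * Fgen q m) := by
  rw [hKF, smul_smul, mul_inv_cancel₀ (pow_ne_zero _ hq0), one_smul]

lemma hKinvF (q : ℂ) (m : ℕ) (hq0 : q ≠ 0) :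
    Kinvgen q m * Fgen q m = q ^ 2 • (Fgen q m * Kinvgen q m) := by
  have h := congrArg (fun x => Kinvgen q m * x * Kinvgen q m) (hFK q m hq0)
  simp only [mul_smul_comm, smul_mul_assoc] at h
  calc Kinvgen q m * Fgen q m
      = Kinvgen q m * Fgen q m * (Kgen q m * Kinvgen q m) := by rw [hKKinv, mul_one]
    _ = Kinvgen q m * (Fgen q m * Kgen q m) * Kinvgen q m := by noncomm_ring
    _ = q ^ 2 • (Kinvgen q m * (Kgen q m * Fgen q m) * Kinvgen q m) := h
    _ = q ^ 2 • ((Kinvgen q m * Kgen q m) * Fgen q m * Kinvgen q m) := by noncomm_ring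
    _ = q ^ 2 • (Fgen q m * Kinvgen q m) := by rw [hKinvK, one_mul]
set_option maxHeartbeats 1000000

lemma swap_pow_left {A : Type*} [Ring A] [Algebra ℂ A] {a b : A} {c : ℂ}
    (h : a * b = c • (b * a)) (n : ℕ) : a ^ n * b = c ^ n • (b * a ^ n) := by
  induction n with
  | zero => simp
  | succ n ih =>
    rw [pow_succ, mul_assoc, h, mul_smul_comm, ← mul_assoc, ih, smul_mul_assoc,
      smul_smul, pow_succ, mul_assoc]
    ring_nf

lemma swap_pow_right {A : Type*} [Ring A] [Algebra ℂ A] {a b : A} {c : ℂ}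
    (h : a * b = c • (b * a)) (n : ℕ) : a * b ^ n = c ^ n • (b ^ n * a) := by
  induction n with
  | zero => simp
  | succ n ih =>
    rw [pow_succ, ← mul_assoc, ih, smul_mul_assoc, mul_assoc, h, mul_smul_comm,
      smul_smul, pow_succ, ← mul_assoc]


lemma casE (q : ℂ) (m : ℕ) (hm : 1 ≤ m) (hq0 : q ≠ 0)
    (hq : ∀ k : ℕ, 0 < k → q ^ k ≠ 1) :
    Casimir q m * Egen q m = Egen q m * Casimir q m := by
  set e := Egen q m with he
  set f := Fgen q m with hf
  set k := Kgen q m with hk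
  set k' := Kinvgen q m with hk'
  have hs : q - q⁻¹ ≠ 0 := by
    intro h
    apply hq 2 (by norm_num)
    have : q = q⁻¹ := sub_eq_zero.mp h
    calc q ^ 2 = q * q := sq q
      _ = q * q⁻¹ := by rw [← this]
      _ = 1 := mul_inv_cancel₀ hq0
  have hQ1 : q ^ (2 * m) - 1 ≠ 0 := sub_ne_zero.mpr (hq (2 * m) (by omega))
  have h2 : q ^ 2 - 1 ≠ 0 := sub_ne_zero.mpr (hq 2 (by norm_num))
  have h3 : (1 - q ^ 2 + (q ^ 2 * q ^ (m * 2) - q ^ (m * 2))) ≠ 0 := by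
    have he' : (1 - q ^ 2 + (q ^ 2 * q ^ (m * 2) - q ^ (m * 2)))
        = (q ^ 2 - 1) * (q ^ (2 * m) - 1) := by rw [mul_comm 2 m]; ring
    rw [he']; exact mul_ne_zero h2 hQ1
  have h4 : (-1 + q ^ 2 : ℂ) ≠ 0 := fun h => h2 (by linear_combination h)
  have hef : e * f = f * e + (q - q⁻¹)⁻¹ • (k ^ m - k' ^ m) := by
    rw [← sub_eq_iff_eq_add']
    exact hEF q m
  have Pk : k ^ m * e = q ^ (2 * m) • (e * k ^ m) := by
    rw [swap_pow_left (hKE q m) m, ← pow_mul]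
  have Pk' : e * k' ^ m = q ^ (2 * m) • (k' ^ m * e) := by
    rw [swap_pow_right (hEKinv q m) m, ← pow_mul]
  rw [Casimir, ← he, ← hf, ← hk, ← hk', add_mul, add_mul, mul_add, mul_add,
    smul_mul_assoc, smul_mul_assoc, mul_smul_comm, mul_smul_comm, Pk, Pk',
    ← mul_assoc e f e, hef, add_mul, smul_mul_assoc, sub_mul (k ^ m) (k' ^ m) e, Pk]
  match_scalars
  all_goals clear hef Pk Pk' he hf hk hk' hq e f k k'
  all_goals field_simp
  all_goals ring

lemma casF (q : ℂ) (m : ℕ) (hm : 1 ≤ m) (hq0 : q ≠ 0)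
    (hq : ∀ k : ℕ, 0 < k → q ^ k ≠ 1) :
    Casimir q m * Fgen q m = Fgen q m * Casimir q m := by
  set e := Egen q m with he
  set f := Fgen q m with hf
  set k := Kgen q m with hk
  set k' := Kinvgen q m with hk'
  have hQ1 : q ^ (2 * m) - 1 ≠ 0 := sub_ne_zero.mpr (hq (2 * m) (by omega))
  have h2 : q ^ 2 - 1 ≠ 0 := sub_ne_zero.mpr (hq 2 (by norm_num))
  have hef : e * f = f * e + (q - q⁻¹)⁻¹ • (k ^ m - k' ^ m) := by
    rw [← sub_eq_iff_eq_add']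
    exact hEF q m
  have Pf1 : f * k ^ m = q ^ (2 * m) • (k ^ m * f) := by
    rw [swap_pow_right (hFK q m hq0) m, ← pow_mul]
  have Pf2 : k' ^ m * f = q ^ (2 * m) • (f * k' ^ m) := by
    rw [swap_pow_left (hKinvF q m hq0) m, ← pow_mul]
  rw [Casimir, ← he, ← hf, ← hk, ← hk', add_mul, add_mul, mul_add, mul_add,
    smul_mul_assoc, smul_mul_assoc, mul_smul_comm, mul_smul_comm, Pf2,
    mul_assoc f e f, hef, mul_add, mul_smul_comm, mul_sub f (k ^ m) (k' ^ m), Pf1]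
  match_scalars
  all_goals clear hef Pf1 Pf2 he hf hk hk' hq e f k k'
  all_goals field_simp
  all_goals ring

lemma casK (q : ℂ) (m : ℕ) (hm : 1 ≤ m) (hq0 : q ≠ 0) :
    Casimir q m * Kgen q m = Kgen q m * Casimir q m := by
  set e := Egen q m with he
  set f := Fgen q m with hf
  set k := Kgen q m with hk
  set k' := Kinvgen q m with hk'
  have ha : k * k' = 1 := hKKinv q m
  have hb : k' * k = 1 := hKinvK q m
  have hkfe : k * (f * e) = f * e * k := by
    have h1 : k * f = (q ^ 2)⁻¹ • (f * k) := hKF q m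
    have h2' : k * e = q ^ 2 • (e * k) := hKE q m
    rw [← mul_assoc, h1, smul_mul_assoc, mul_assoc, h2', mul_smul_comm, smul_smul,
      inv_mul_cancel₀ (pow_ne_zero 2 hq0), one_smul, mul_assoc]
  have hkk : k * k ^ m = k ^ m * k := by
    rw [← pow_succ', pow_succ]
  have hkk' : k * k' ^ m = k' ^ m * k := by
    obtain ⟨n, rfl⟩ : ∃ n, m = n + 1 := ⟨m - 1, by omega⟩
    calc k * k' ^ (n + 1) = k * (k' * k' ^ n) := by rw [pow_succ']
      _ = k' ^ n := by rw [← mul_assoc, ha, one_mul]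
      _ = k' ^ n * (k' * k) := by rw [hb, mul_one]
      _ = k' ^ (n + 1) * k := by rw [← mul_assoc, ← pow_succ]
  rw [Casimir, ← he, ← hf, ← hk, ← hk', add_mul, add_mul, mul_add, mul_add,
    smul_mul_assoc, smul_mul_assoc, mul_smul_comm, mul_smul_comm, hkfe, hkk, hkk']

/-- The Casimir element
`Ω = FE + (q^{2m}K^m + K^{-m})/((q^{2m} - 1)(q - q⁻¹))` commutes with `E`, `F` and
`K`, and hence lies in the center of `U_q(f_m(K))`. -/
theorem stmt6 (q : ℂ) (m : ℕ) (hm : 1 ≤ m) (hq0 : q ≠ 0)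
    (hq : ∀ k : ℕ, 0 < k → q ^ k ≠ 1) :
    Casimir q m * Egen q m = Egen q m * Casimir q m ∧
    Casimir q m * Fgen q m = Fgen q m * Casimir q m ∧
    Casimir q m * Kgen q m = Kgen q m * Casimir q m ∧
    Casimir q m ∈ Subalgebra.center ℂ (Uq q m) := by
  have hE := casE q m hm hq0 hq
  have hF := casF q m hm hq0 hq
  have hK := casK q m hm hq0
  have hKinv : Casimir q m * Kinvgen q m = Kinvgen q m * Casimir q m := by
    calc Casimir q m * Kinvgen q m
        = Kinvgen q m * Kgen q m * (Casimir q m * Kinvgen q m) := by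
          rw [hKinvK, one_mul]
      _ = Kinvgen q m * (Kgen q m * Casimir q m) * Kinvgen q m := by noncomm_ring
      _ = Kinvgen q m * (Casimir q m * Kgen q m) * Kinvgen q m := by rw [hK]
      _ = Kinvgen q m * Casimir q m * (Kgen q m * Kinvgen q m) := by noncomm_ring
      _ = Kinvgen q m * Casimir q m := by rw [hKKinv, mul_one]
  refine ⟨hE, hF, hK, ?_⟩
  rw [Subalgebra.mem_center_iff]
  intro b
  obtain ⟨x, rfl⟩ := RingQuot.mkAlgHom_surjective ℂ (UqRel q m) b
  induction x using FreeAlgebra.induction with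
  | grade0 r =>
    rw [AlgHom.commutes]
    exact Algebra.commutes r (Casimir q m)
  | grade1 i =>
    cases i
    · exact hE.symm
    · exact hF.symm
    · exact hK.symm
    · exact hKinv.symm
  | mul a b ha hb =>
    rw [map_mul, mul_assoc, hb, ← mul_assoc, ha, mul_assoc]
  | add a b ha hb =>
    rw [map_add, add_mul, mul_add, ha, hb]
end
end

section
/- U_q(f(K)) decomposes as a vector space as U_q(F, K^{±1}) ⊗_C U_q(E), where U_q(E) is the subalgebra generated by E and U_q(F, K^{±1}) the subalgebra generated by F, K^{±1}; equivalently the monomials F^a K^b E^c with a, c ≥ 0 and b ∈ Z form a C-basis of U_q(f(K)). -/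
noncomputable section

open FreeAlgebra in
/-- The defining relations of `U_q(f(K))`, where the Laurent polynomial `f` is given by
its finitely supported coefficient function `f : ℤ →₀ ℂ`. -/
inductive UqfRel (q : ℂ) (f : ℤ →₀ ℂ) : FreeAlgebra ℂ UqGen → FreeAlgebra ℂ UqGen → Prop
  | KE : UqfRel q f (ι ℂ UqGen.K * ι ℂ UqGen.E) (q ^ 2 • (ι ℂ UqGen.E * ι ℂ UqGen.K))
  | KF : UqfRel q f (ι ℂ UqGen.K * ι ℂ UqGen.F) ((q ^ 2)⁻¹ • (ι ℂ UqGen.F * ι ℂ UqGen.K))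
  | KKinv : UqfRel q f (ι ℂ UqGen.K * ι ℂ UqGen.Kinv) 1
  | KinvK : UqfRel q f (ι ℂ UqGen.Kinv * ι ℂ UqGen.K) 1
  | EF : UqfRel q f (ι ℂ UqGen.E * ι ℂ UqGen.F - ι ℂ UqGen.F * ι ℂ UqGen.E)
      (f.sum fun i c => c • lpow (ι ℂ UqGen.K) (ι ℂ UqGen.Kinv) i)

/-- The algebra `U_q(f(K))`. -/
abbrev Uqf (q : ℂ) (f : ℤ →₀ ℂ) : Type := RingQuot (UqfRel q f)

def Eg (q : ℂ) (f : ℤ →₀ ℂ) : Uqf q f := RingQuot.mkAlgHom ℂ (UqfRel q f) (FreeAlgebra.ι ℂ UqGen.E)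
def Fg (q : ℂ) (f : ℤ →₀ ℂ) : Uqf q f := RingQuot.mkAlgHom ℂ (UqfRel q f) (FreeAlgebra.ι ℂ UqGen.F)
def Kg (q : ℂ) (f : ℤ →₀ ℂ) : Uqf q f := RingQuot.mkAlgHom ℂ (UqfRel q f) (FreeAlgebra.ι ℂ UqGen.K)
def Kinvg (q : ℂ) (f : ℤ →₀ ℂ) : Uqf q f := RingQuot.mkAlgHom ℂ (UqfRel q f) (FreeAlgebra.ι ℂ UqGen.Kinv)

theorem lpow_unit {A : Type*} [Monoid A] (u : Aˣ) (n : ℤ) :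
    lpow (u : A) (↑u⁻¹ : A) n = ((u ^ n : Aˣ) : A) := by
  unfold lpow
  split_ifs with h
  · rw [← Units.val_pow_eq_pow_val]
    congr 1
    rw [← zpow_natCast, Int.toNat_of_nonneg h]
  · rw [← Units.val_pow_eq_pow_val]
    congr 1
    rw [← zpow_natCast, Int.toNat_of_nonneg (by omega), zpow_neg, ← inv_zpow, inv_inv]

namespace Stmt8

variable (q : ℂ) (f : ℤ →₀ ℂ)

abbrev V : Type := (ℕ × ℤ × ℕ) →₀ ℂ

def δ (p : ℕ × ℤ × ℕ) : V := Finsupp.single p 1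

def g (a : ℕ) (i : ℤ) : ℂ := ∑ j ∈ Finset.range a, q ^ (-2 * i * (j : ℤ))

@[simp] theorem g_zero (i : ℤ) : g q 0 i = 0 := by simp [g]

theorem g_succ (a : ℕ) (i : ℤ) : g q (a + 1) i = g q a i + q ^ (-2 * i * (a : ℤ)) := by
  simp [g, Finset.sum_range_succ]

def mk' (h : (ℕ × ℤ × ℕ) → V) : Module.End ℂ V := Finsupp.lift V ℂ _ h

theorem mk'_δ (h : (ℕ × ℤ × ℕ) → V) (p : ℕ × ℤ × ℕ) : mk' h (δ p) = h p := by
  simp [mk', δ, Finsupp.lift_apply, Finsupp.sum_single_index]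

def mkE : Module.End ℂ V := mk' fun p =>
  q ^ (-2 * p.2.1) • δ (p.1, p.2.1, p.2.2 + 1) +
    f.sum fun i c => (c * g q p.1 i) • δ (p.1 - 1, p.2.1 + i, p.2.2)

def mkF : Module.End ℂ V := mk' fun p => δ (p.1 + 1, p.2.1, p.2.2)

def mkK : Module.End ℂ V := mk' fun p => q ^ (-2 * (p.1 : ℤ)) • δ (p.1, p.2.1 + 1, p.2.2)

def mkKinv : Module.End ℂ V := mk' fun p => q ^ (2 * (p.1 : ℤ)) • δ (p.1, p.2.1 - 1, p.2.2)

theorem mkE_δ (a : ℕ) (b : ℤ) (c : ℕ) : mkE q f (δ (a, b, c)) =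
    q ^ (-2 * b) • δ (a, b, c + 1) +
      f.sum fun i co => (co * g q a i) • δ (a - 1, b + i, c) := mk'_δ _ _

theorem mkF_δ (a : ℕ) (b : ℤ) (c : ℕ) : mkF (δ (a, b, c)) = δ (a + 1, b, c) := mk'_δ _ _

theorem mkK_δ (a : ℕ) (b : ℤ) (c : ℕ) :
    mkK q (δ (a, b, c)) = q ^ (-2 * (a : ℤ)) • δ (a, b + 1, c) := mk'_δ _ _

theorem mkKinv_δ (a : ℕ) (b : ℤ) (c : ℕ) :
    mkKinv q (δ (a, b, c)) = q ^ (2 * (a : ℤ)) • δ (a, b - 1, c) := mk'_δ _ _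

theorem end_ext {φ ψ : Module.End ℂ V} (h : ∀ p, φ (δ p) = ψ (δ p)) : φ = ψ := by
  apply Finsupp.lhom_ext
  intro p b
  have : (Finsupp.single p b : V) = b • δ p := by simp [δ, Finsupp.smul_single]
  rw [this, map_smul, map_smul, h]


theorem qmul (q : ℂ) (hq0 : q ≠ 0) (m n : ℤ) : q ^ m * q ^ n = q ^ (m + n) :=
  (zpow_add₀ hq0 m n).symm

theorem smul_δ_congr (q : ℂ) {m n : ℤ} {p p' : ℕ × ℤ × ℕ} (h : m = n) (h2 : p = p') :
    q ^ m • δ p = q ^ n • δ p' := by rw [h, h2]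

theorem hKKinv (q : ℂ) (hq0 : q ≠ 0) : mkK q * mkKinv q = 1 := by
  apply end_ext; rintro ⟨a, b, c⟩
  rw [Module.End.mul_apply, mkKinv_δ, map_smul, mkK_δ, smul_smul, qmul q hq0]
  norm_num [δ]

theorem hKinvK (q : ℂ) (hq0 : q ≠ 0) : mkKinv q * mkK q = 1 := by
  apply end_ext; rintro ⟨a, b, c⟩
  rw [Module.End.mul_apply, mkK_δ, map_smul, mkKinv_δ, smul_smul, qmul q hq0]
  norm_num [δ]

theorem mkK_pow_δ (q : ℂ) (hq0 : q ≠ 0) (m : ℕ) (a : ℕ) (b : ℤ) (c : ℕ) :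
    (mkK q ^ m) (δ (a, b, c)) = q ^ (-2 * (a : ℤ) * m) • δ (a, b + m, c) := by
  induction m with
  | zero => simp [δ]
  | succ i ih =>
      rw [pow_succ', Module.End.mul_apply, ih, map_smul, mkK_δ, smul_smul, qmul q hq0]
      exact smul_δ_congr q (by push_cast; ring) (by push_cast; refine congrArg _ ?_; exact congrArg (·, c) (by ring))

theorem mkKinv_pow_δ (q : ℂ) (hq0 : q ≠ 0) (m : ℕ) (a : ℕ) (b : ℤ) (c : ℕ) :
    (mkKinv q ^ m) (δ (a, b, c)) = q ^ (2 * (a : ℤ) * m) • δ (a, b - m, c) := by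
  induction m with
  | zero => simp [δ]
  | succ i ih =>
      rw [pow_succ', Module.End.mul_apply, ih, map_smul, mkKinv_δ, smul_smul, qmul q hq0]
      exact smul_δ_congr q (by push_cast; ring) (by push_cast; refine congrArg _ ?_; exact congrArg (·, c) (by ring))

theorem lpowK_δ (q : ℂ) (hq0 : q ≠ 0) (n : ℤ) (a : ℕ) (b : ℤ) (c : ℕ) :
    lpow (mkK q) (mkKinv q) n (δ (a, b, c)) = q ^ (-2 * (a : ℤ) * n) • δ (a, b + n, c) := by
  unfold lpow
  split_ifs with h
  · rw [mkK_pow_δ q hq0]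
    exact smul_δ_congr q (by rw [Int.toNat_of_nonneg h]) (by rw [Int.toNat_of_nonneg h])
  · rw [mkKinv_pow_δ q hq0]
    have h2 : ((-n).toNat : ℤ) = -n := Int.toNat_of_nonneg (by omega)
    exact smul_δ_congr q (by rw [h2]; ring) (by rw [h2]; refine congrArg _ ?_; exact congrArg (·, c) (by ring))

theorem smul_δ_eq (q : ℂ) {s t : ℂ} {p p' : ℕ × ℤ × ℕ} (h : s = t) (h2 : p = p') :
    s • δ p = t • δ p' := by rw [h, h2]

theorem sum_end_apply (f : ℤ →₀ ℂ) (φ : ℤ → ℂ → Module.End ℂ V) (x : V) :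
    (f.sum fun i c => φ i c) x = f.sum fun i c => (φ i c) x :=
  map_finsuppSum (LinearMap.applyₗ x) f φ

theorem hKE (q : ℂ) (f : ℤ →₀ ℂ) (hq0 : q ≠ 0) :
    mkK q * mkE q f = q ^ 2 • (mkE q f * mkK q) := by
  apply end_ext; rintro ⟨a, b, c⟩
  simp only [Module.End.mul_apply, LinearMap.smul_apply, mkE_δ, mkK_δ, map_add, map_smul,
    map_finsuppSum, smul_add, Finsupp.smul_sum, smul_smul]
  congr 1
  · refine smul_δ_eq q ?_ rfl
    simp only [← zpow_natCast q, mul_comm, mul_assoc, mul_left_comm, ← zpow_add₀ hq0]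
    ring_nf
  · refine Finsupp.sum_congr fun i _ => ?_
    obtain _ | a := a
    · simp
    · refine smul_δ_eq q ?_ (by simp [Prod.ext_iff]; omega)
      simp only [Nat.add_sub_cancel]
      have key : q ^ (2:ℕ) * q ^ (-2*((a:ℤ)+1)) = q ^ (-2*(a:ℤ)) := by
        rw [← zpow_natCast q 2, qmul q hq0]; congr 1; push_cast; ring
      push_cast at key ⊢
      linear_combination (-(f i * g q (a+1) i)) * key

theorem hKF (q : ℂ) (hq0 : q ≠ 0) :
    mkK q * mkF = (q ^ 2)⁻¹ • (mkF * mkK q) := by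
  apply end_ext; rintro ⟨a, b, c⟩
  simp only [Module.End.mul_apply, LinearMap.smul_apply, mkF_δ, mkK_δ, map_smul, smul_smul]
  refine smul_δ_eq q ?_ rfl
  rw [← zpow_natCast q 2, ← zpow_neg]
  push_cast
  simp only [← zpow_natCast q, mul_comm, mul_assoc, mul_left_comm, ← zpow_add₀ hq0]
  ring_nf

theorem hEF (q : ℂ) (f : ℤ →₀ ℂ) (hq0 : q ≠ 0) :
    mkE q f * mkF - mkF * mkE q f = f.sum fun i c => c • lpow (mkK q) (mkKinv q) i := by
  apply end_ext; rintro ⟨a, b, c⟩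
  rw [LinearMap.sub_apply, sum_end_apply]
  simp only [Module.End.mul_apply, mkF_δ, mkE_δ, map_add, map_smul, map_finsuppSum,
    LinearMap.smul_apply, lpowK_δ q hq0, smul_smul]
  rw [add_sub_add_left_eq_sub, ← Finsupp.sum_sub]
  refine Finsupp.sum_congr fun i _ => ?_
  obtain _ | a := a
  · simp only [g_zero, mul_zero, zero_smul, sub_zero]
    refine smul_δ_eq q ?_ rfl
    norm_num [g]
  · simp only [Nat.add_sub_cancel, g_succ, mul_add, add_smul, add_sub_cancel_left]
    refine smul_δ_eq q ?_ rfl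
    congr 1
    push_cast
    ring

theorem map_lpow {A B : Type*} [Monoid A] [Monoid B] {F : Type*} [FunLike F A B]
    [MonoidHomClass F A B] (φ : F) (x y : A) (n : ℤ) :
    φ (lpow x y n) = lpow (φ x) (φ y) n := by
  unfold lpow; split_ifs <;> rw [map_pow]

def gen (q : ℂ) (f : ℤ →₀ ℂ) : UqGen → Module.End ℂ V
  | .E => mkE q f
  | .F => mkF
  | .K => mkK q
  | .Kinv => mkKinv q

theorem hrel (q : ℂ) (f : ℤ →₀ ℂ) (hq0 : q ≠ 0) ⦃x y : FreeAlgebra ℂ UqGen⦄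
    (h : UqfRel q f x y) : FreeAlgebra.lift ℂ (gen q f) x = FreeAlgebra.lift ℂ (gen q f) y := by
  induction h with
  | KE => simp only [map_mul, map_smul, FreeAlgebra.lift_ι_apply]; exact hKE q f hq0
  | KF => simp only [map_mul, map_smul, FreeAlgebra.lift_ι_apply]; exact hKF q hq0
  | KKinv => simp only [map_mul, map_one, FreeAlgebra.lift_ι_apply]; exact hKKinv q hq0
  | KinvK => simp only [map_mul, map_one, FreeAlgebra.lift_ι_apply]; exact hKinvK q hq0
  | EF =>
      rw [map_sub, map_mul, map_mul, map_finsuppSum]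
      simp only [map_smul, map_lpow, FreeAlgebra.lift_ι_apply]
      exact hEF q f hq0

def ρ (q : ℂ) (f : ℤ →₀ ℂ) (hq0 : q ≠ 0) : Uqf q f →ₐ[ℂ] Module.End ℂ V :=
  RingQuot.liftAlgHom ℂ ⟨FreeAlgebra.lift ℂ (gen q f), hrel q f hq0⟩

theorem ρ_E (q : ℂ) (f : ℤ →₀ ℂ) (hq0 : q ≠ 0) : ρ q f hq0 (Eg q f) = mkE q f := by
  rw [Eg, ρ, RingQuot.liftAlgHom_mkAlgHom_apply, FreeAlgebra.lift_ι_apply]; rfl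

theorem ρ_F (q : ℂ) (f : ℤ →₀ ℂ) (hq0 : q ≠ 0) : ρ q f hq0 (Fg q f) = mkF := by
  rw [Fg, ρ, RingQuot.liftAlgHom_mkAlgHom_apply, FreeAlgebra.lift_ι_apply]; rfl

theorem ρ_K (q : ℂ) (f : ℤ →₀ ℂ) (hq0 : q ≠ 0) : ρ q f hq0 (Kg q f) = mkK q := by
  rw [Kg, ρ, RingQuot.liftAlgHom_mkAlgHom_apply, FreeAlgebra.lift_ι_apply]; rfl

theorem ρ_Kinv (q : ℂ) (f : ℤ →₀ ℂ) (hq0 : q ≠ 0) : ρ q f hq0 (Kinvg q f) = mkKinv q := by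
  rw [Kinvg, ρ, RingQuot.liftAlgHom_mkAlgHom_apply, FreeAlgebra.lift_ι_apply]; rfl

def mono (q : ℂ) (f : ℤ →₀ ℂ) (p : ℕ × ℤ × ℕ) : Uqf q f :=
  Fg q f ^ p.1 * lpow (Kg q f) (Kinvg q f) p.2.1 * Eg q f ^ p.2.2

def π (q : ℂ) (f : ℤ →₀ ℂ) (hq0 : q ≠ 0) : Uqf q f →ₗ[ℂ] V :=
  (LinearMap.applyₗ (δ (0, 0, 0))).comp (ρ q f hq0).toLinearMap

theorem mkE_pow_δ0 (q : ℂ) (f : ℤ →₀ ℂ) (c : ℕ) :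
    (mkE q f ^ c) (δ (0, 0, 0)) = δ (0, 0, c) := by
  induction c with
  | zero => rfl
  | succ n ih =>
      rw [pow_succ', Module.End.mul_apply, ih, mkE_δ]
      simp

theorem mkF_pow_δ (a m : ℕ) (b : ℤ) (c : ℕ) :
    (mkF ^ m) (δ (a, b, c)) = δ (a + m, b, c) := by
  induction m with
  | zero => simp
  | succ n ih => rw [pow_succ', Module.End.mul_apply, ih, mkF_δ]; rfl

theorem π_mono (q : ℂ) (f : ℤ →₀ ℂ) (hq0 : q ≠ 0) (p : ℕ × ℤ × ℕ) :
    π q f hq0 (mono q f p) = δ p := by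
  obtain ⟨a, b, c⟩ := p
  show ρ q f hq0 _ (δ (0,0,0)) = _
  rw [mono, map_mul, map_mul, map_pow, map_pow, map_lpow, ρ_E, ρ_F, ρ_K, ρ_Kinv,
    Module.End.mul_apply, Module.End.mul_apply, mkE_pow_δ0, lpowK_δ q hq0, map_smul, mkF_pow_δ]
  norm_num

end Stmt8


namespace Stmt8

section Span

variable {q : ℂ} {f : ℤ →₀ ℂ}

theorem r1 : Kg q f * Eg q f = q ^ 2 • (Eg q f * Kg q f) := by
  have h := RingQuot.mkAlgHom_rel ℂ (UqfRel.KE (q := q) (f := f))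
  rwa [map_mul, map_smul, map_mul] at h

theorem r2 : Kg q f * Fg q f = (q ^ 2)⁻¹ • (Fg q f * Kg q f) := by
  have h := RingQuot.mkAlgHom_rel ℂ (UqfRel.KF (q := q) (f := f))
  rwa [map_mul, map_smul, map_mul] at h

theorem r3 : Kg q f * Kinvg q f = 1 := by
  have h := RingQuot.mkAlgHom_rel ℂ (UqfRel.KKinv (q := q) (f := f))
  rwa [map_mul, map_one] at h

theorem r4 : Kinvg q f * Kg q f = 1 := by
  have h := RingQuot.mkAlgHom_rel ℂ (UqfRel.KinvK (q := q) (f := f))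
  rwa [map_mul, map_one] at h

/-- `f(K)` as an element of `Uqf`. -/
def fK (q : ℂ) (f : ℤ →₀ ℂ) : Uqf q f := f.sum fun i c => c • lpow (Kg q f) (Kinvg q f) i

theorem r5 : Eg q f * Fg q f = Fg q f * Eg q f + fK q f := by
  have h := RingQuot.mkAlgHom_rel ℂ (UqfRel.EF (q := q) (f := f))
  rw [map_sub, map_mul, map_mul, map_finsuppSum] at h
  simp only [map_smul, map_lpow (RingQuot.mkAlgHom ℂ (UqfRel q f))] at h
  rw [sub_eq_iff_eq_add] at h
  exact h.trans (by rw [add_comm]; rfl)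

def uK (q : ℂ) (f : ℤ →₀ ℂ) : (Uqf q f)ˣ := ⟨Kg q f, Kinvg q f, r3, r4⟩

theorem lpow_eq (n : ℤ) : lpow (Kg q f) (Kinvg q f) n = ((uK q f ^ n : _ˣ) : Uqf q f) :=
  lpow_unit (uK q f) n

theorem lpow_add (m n : ℤ) : lpow (Kg q f) (Kinvg q f) m * lpow (Kg q f) (Kinvg q f) n =
    lpow (Kg q f) (Kinvg q f) (m + n) := by
  rw [lpow_eq, lpow_eq, lpow_eq, ← Units.val_mul, ← zpow_add]

theorem K_mul_lpow (n : ℤ) : Kg q f * lpow (Kg q f) (Kinvg q f) n =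
    lpow (Kg q f) (Kinvg q f) (1 + n) := by
  rw [lpow_eq n, lpow_eq (1 + n), zpow_add, zpow_one, Units.val_mul]
  rfl

theorem Kinv_mul_lpow (n : ℤ) : Kinvg q f * lpow (Kg q f) (Kinvg q f) n =
    lpow (Kg q f) (Kinvg q f) (-1 + n) := by
  rw [lpow_eq n, lpow_eq (-1 + n), zpow_add, zpow_neg_one, Units.val_mul]
  rfl

theorem lpow_succ (n : ℤ) : lpow (Kg q f) (Kinvg q f) (n + 1) =
    lpow (Kg q f) (Kinvg q f) n * Kg q f := by
  rw [lpow_eq n, lpow_eq (n + 1), zpow_add_one, Units.val_mul]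
  rfl

theorem lpow_pred (n : ℤ) : lpow (Kg q f) (Kinvg q f) (n - 1) =
    lpow (Kg q f) (Kinvg q f) n * Kinvg q f := by
  rw [lpow_eq n, lpow_eq (n - 1), zpow_sub_one, Units.val_mul]
  rfl

theorem c1 (hq0 : q ≠ 0) : Eg q f * Kg q f = (q ^ 2)⁻¹ • (Kg q f * Eg q f) := by
  rw [r1, smul_smul, inv_mul_cancel₀ (pow_ne_zero 2 hq0), one_smul]

theorem c2 : Eg q f * Kinvg q f = q ^ 2 • (Kinvg q f * Eg q f) := by
  have h1 : Kinvg q f * (Kg q f * Eg q f) * Kinvg q f = Eg q f * Kinvg q f := by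
    rw [← mul_assoc, r4, one_mul]
  have h2 : Kinvg q f * (q ^ 2 • (Eg q f * Kg q f)) * Kinvg q f =
      q ^ 2 • (Kinvg q f * Eg q f) := by
    rw [mul_smul_comm, smul_mul_assoc]
    congr 1
    rw [← mul_assoc, mul_assoc (Kinvg q f * Eg q f), r3, mul_one]
  rw [← h1, r1, h2]

theorem c3 (hq0 : q ≠ 0) : Kinvg q f * Fg q f = q ^ 2 • (Fg q f * Kinvg q f) := by
  have h1 : Kinvg q f * (Kg q f * Fg q f) * Kinvg q f = Fg q f * Kinvg q f := by
    rw [← mul_assoc, r4, one_mul]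
  have h2 : Kinvg q f * ((q ^ 2)⁻¹ • (Fg q f * Kg q f)) * Kinvg q f =
      (q ^ 2)⁻¹ • (Kinvg q f * Fg q f) := by
    rw [mul_smul_comm, smul_mul_assoc]
    congr 1
    rw [← mul_assoc, mul_assoc (Kinvg q f * Fg q f), r3, mul_one]
  have h3 : Fg q f * Kinvg q f = (q ^ 2)⁻¹ • (Kinvg q f * Fg q f) := by rw [← h1, r2, h2]
  rw [h3, smul_smul, mul_inv_cancel₀ (pow_ne_zero 2 hq0), one_smul]

end Span

end Stmt8


namespace Stmt8

section Span2

variable {q : ℂ} {f : ℤ →₀ ℂ}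

def Sp (q : ℂ) (f : ℤ →₀ ℂ) : Submodule ℂ (Uqf q f) :=
  Submodule.span ℂ (Set.range (mono q f))

theorem mono_mem (p : ℕ × ℤ × ℕ) : mono q f p ∈ Sp q f :=
  Submodule.subset_span ⟨p, rfl⟩

theorem lpow_zero' : lpow (Kg q f) (Kinvg q f) 0 = 1 := by simp [lpow]

theorem one_eq_mono : (1 : Uqf q f) = mono q f (0, 0, 0) := by
  rw [mono, lpow_zero']; simp

theorem F_mul_mono (p : ℕ × ℤ × ℕ) :
    Fg q f * mono q f p = mono q f (p.1 + 1, p.2.1, p.2.2) := by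
  obtain ⟨a, b, c⟩ := p
  simp only [mono, pow_succ', mul_assoc]

theorem F_mul_mem {x : Uqf q f} (hx : x ∈ Sp q f) : Fg q f * x ∈ Sp q f := by
  induction hx using Submodule.span_induction with
  | mem x h => obtain ⟨p, rfl⟩ := h; rw [F_mul_mono]; exact mono_mem _
  | zero => rw [mul_zero]; exact zero_mem _
  | add x y _ _ hx hy => rw [mul_add]; exact add_mem hx hy
  | smul s x _ hx => rw [mul_smul_comm]; exact Submodule.smul_mem _ s hx

theorem bK_F (y : Uqf q f) : Kg q f * (Fg q f * y) = (q ^ 2)⁻¹ • (Fg q f * (Kg q f * y)) := by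
  rw [← mul_assoc, r2, smul_mul_assoc, mul_assoc]

theorem bKinv_F (hq0 : q ≠ 0) (y : Uqf q f) :
    Kinvg q f * (Fg q f * y) = q ^ 2 • (Fg q f * (Kinvg q f * y)) := by
  rw [← mul_assoc, c3 hq0, smul_mul_assoc, mul_assoc]

theorem bE_K (hq0 : q ≠ 0) (y : Uqf q f) :
    Eg q f * (Kg q f * y) = (q ^ 2)⁻¹ • (Kg q f * (Eg q f * y)) := by
  rw [← mul_assoc, c1 hq0, smul_mul_assoc, mul_assoc]

theorem bE_Kinv (y : Uqf q f) :
    Eg q f * (Kinvg q f * y) = q ^ 2 • (Kinvg q f * (Eg q f * y)) := by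
  rw [← mul_assoc, c2, smul_mul_assoc, mul_assoc]

theorem CK_Fpow (a : ℕ) : ∃ s : ℂ, ∀ y : Uqf q f,
    Kg q f * (Fg q f ^ a * y) = s • (Fg q f ^ a * (Kg q f * y)) := by
  induction a with
  | zero => exact ⟨1, fun y => by simp⟩
  | succ a ih =>
      obtain ⟨s, hs⟩ := ih
      refine ⟨(q ^ 2)⁻¹ * s, fun y => ?_⟩
      rw [pow_succ', mul_assoc, bK_F, hs, mul_smul_comm, smul_smul, mul_assoc]

theorem CKinv_Fpow (hq0 : q ≠ 0) (a : ℕ) : ∃ s : ℂ, ∀ y : Uqf q f,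
    Kinvg q f * (Fg q f ^ a * y) = s • (Fg q f ^ a * (Kinvg q f * y)) := by
  induction a with
  | zero => exact ⟨1, fun y => by simp⟩
  | succ a ih =>
      obtain ⟨s, hs⟩ := ih
      refine ⟨q ^ 2 * s, fun y => ?_⟩
      rw [pow_succ', mul_assoc, bKinv_F hq0, hs, mul_smul_comm, smul_smul, mul_assoc]

theorem CE_lpow (hq0 : q ≠ 0) (n : ℤ) : ∃ s : ℂ, ∀ y : Uqf q f,
    Eg q f * (lpow (Kg q f) (Kinvg q f) n * y) =
      s • (lpow (Kg q f) (Kinvg q f) n * (Eg q f * y)) := by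
  induction n using Int.induction_on with
  | zero => exact ⟨1, fun y => by simp [lpow_zero']⟩
  | succ n ih =>
      obtain ⟨s, hs⟩ := ih
      refine ⟨s * (q ^ 2)⁻¹, fun y => ?_⟩
      rw [lpow_succ, mul_assoc, hs, bE_K hq0, mul_smul_comm, smul_smul, ← mul_assoc]
  | pred n ih =>
      obtain ⟨s, hs⟩ := ih
      refine ⟨s * q ^ 2, fun y => ?_⟩
      rw [lpow_pred, mul_assoc, hs, bE_Kinv, mul_smul_comm, smul_smul, ← mul_assoc]

theorem Clpow_Fpow (hq0 : q ≠ 0) (n : ℤ) (a : ℕ) : ∃ s : ℂ, ∀ y : Uqf q f,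
    lpow (Kg q f) (Kinvg q f) n * (Fg q f ^ a * y) =
      s • (Fg q f ^ a * (lpow (Kg q f) (Kinvg q f) n * y)) := by
  induction n using Int.induction_on with
  | zero => exact ⟨1, fun y => by simp [lpow_zero']⟩
  | succ n ih =>
      obtain ⟨s, hs⟩ := ih
      obtain ⟨t, ht⟩ := CK_Fpow (q := q) (f := f) a
      refine ⟨s * t, fun y => ?_⟩
      rw [lpow_succ, mul_assoc, ht, mul_smul_comm, hs, smul_smul, mul_comm t s]
      congr 2
      rw [mul_assoc]
  | pred n ih =>
      obtain ⟨s, hs⟩ := ih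
      obtain ⟨t, ht⟩ := CKinv_Fpow (q := q) (f := f) hq0 a
      refine ⟨s * t, fun y => ?_⟩
      rw [lpow_pred, mul_assoc, ht, mul_smul_comm, hs, smul_smul, mul_comm t s]
      congr 2
      rw [mul_assoc]

theorem K_mul_mono (p : ℕ × ℤ × ℕ) : ∃ s : ℂ,
    Kg q f * mono q f p = s • mono q f (p.1, p.2.1 + 1, p.2.2) := by
  obtain ⟨a, b, c⟩ := p
  obtain ⟨s, hs⟩ := CK_Fpow (q := q) (f := f) a
  refine ⟨s, ?_⟩
  simp only [mono]
  rw [mul_assoc, hs, ← mul_assoc (Kg q f), K_mul_lpow, add_comm 1 b, mul_assoc]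

theorem Kinv_mul_mono (hq0 : q ≠ 0) (p : ℕ × ℤ × ℕ) : ∃ s : ℂ,
    Kinvg q f * mono q f p = s • mono q f (p.1, p.2.1 - 1, p.2.2) := by
  obtain ⟨a, b, c⟩ := p
  obtain ⟨s, hs⟩ := CKinv_Fpow (q := q) (f := f) hq0 a
  refine ⟨s, ?_⟩
  simp only [mono]
  rw [mul_assoc, hs, ← mul_assoc (Kinvg q f), Kinv_mul_lpow,
    show (-1 + b : ℤ) = b - 1 from by ring, mul_assoc]

theorem lpow_mul_mono (hq0 : q ≠ 0) (n : ℤ) (p : ℕ × ℤ × ℕ) : ∃ s : ℂ,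
    lpow (Kg q f) (Kinvg q f) n * mono q f p = s • mono q f (p.1, n + p.2.1, p.2.2) := by
  obtain ⟨a, b, c⟩ := p
  obtain ⟨s, hs⟩ := Clpow_Fpow (q := q) (f := f) hq0 n a
  refine ⟨s, ?_⟩
  simp only [mono]
  rw [mul_assoc, hs, ← mul_assoc (lpow (Kg q f) (Kinvg q f) n), lpow_add, mul_assoc]

theorem E_mul_mono_mem (hq0 : q ≠ 0) (a : ℕ) (b : ℤ) (c : ℕ) :
    Eg q f * mono q f (a, b, c) ∈ Sp q f := by
  induction a with
  | zero =>
      obtain ⟨s, hs⟩ := CE_lpow (q := q) (f := f) hq0 b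
      have hm : mono q f (0, b, c + 1) = lpow (Kg q f) (Kinvg q f) b * Eg q f ^ (c + 1) := by
        simp only [mono, pow_zero, one_mul]
      simp only [mono, pow_zero, one_mul]
      rw [hs, ← pow_succ', ← hm]
      exact Submodule.smul_mem _ _ (mono_mem _)
  | succ a ih =>
      rw [show mono q f (a + 1, b, c) = Fg q f * mono q f (a, b, c) from
        (F_mul_mono (a, b, c)).symm,
        ← mul_assoc, r5, add_mul, mul_assoc]
      refine add_mem (F_mul_mem ih) ?_
      rw [fK, Finsupp.sum_mul]
      refine Submodule.sum_mem _ fun i hi => ?_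
      simp only [smul_mul_assoc]
      obtain ⟨s, hs⟩ := lpow_mul_mono (q := q) (f := f) hq0 i (a, b, c)
      rw [hs, smul_smul]
      exact Submodule.smul_mem _ _ (mono_mem _)

theorem mul_mem_span (hq0 : q ≠ 0) (w : FreeAlgebra ℂ UqGen) :
    ∀ x ∈ Sp q f, RingQuot.mkAlgHom ℂ (UqfRel q f) w * x ∈ Sp q f := by
  induction w using FreeAlgebra.induction with
  | grade0 r =>
      intro x hx
      rw [AlgHom.commutes, Algebra.algebraMap_eq_smul_one, smul_mul_assoc, one_mul]
      exact Submodule.smul_mem _ _ hx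
  | grade1 g =>
      intro x hx
      induction hx using Submodule.span_induction with
      | mem x h =>
          obtain ⟨p, rfl⟩ := h
          cases g with
          | E => exact E_mul_mono_mem hq0 p.1 p.2.1 p.2.2
          | F => rw [show RingQuot.mkAlgHom ℂ (UqfRel q f) (FreeAlgebra.ι ℂ UqGen.F) = Fg q f
                  from rfl, F_mul_mono]; exact mono_mem _
          | K =>
              obtain ⟨s, hs⟩ := K_mul_mono (q := q) (f := f) p
              rw [show RingQuot.mkAlgHom ℂ (UqfRel q f) (FreeAlgebra.ι ℂ UqGen.K) = Kg q f
                from rfl, hs]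
              exact Submodule.smul_mem _ _ (mono_mem _)
          | Kinv =>
              obtain ⟨s, hs⟩ := Kinv_mul_mono (q := q) (f := f) hq0 p
              rw [show RingQuot.mkAlgHom ℂ (UqfRel q f) (FreeAlgebra.ι ℂ UqGen.Kinv) = Kinvg q f
                from rfl, hs]
              exact Submodule.smul_mem _ _ (mono_mem _)
      | zero => rw [mul_zero]; exact zero_mem _
      | add x y _ _ hx hy => rw [mul_add]; exact add_mem hx hy
      | smul s x _ hx => rw [mul_smul_comm]; exact Submodule.smul_mem _ s hx
  | mul w1 w2 ih1 ih2 =>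
      intro x hx
      rw [map_mul, mul_assoc]
      exact ih1 _ (ih2 _ hx)
  | add w1 w2 ih1 ih2 =>
      intro x hx
      rw [map_add, add_mul]
      exact add_mem (ih1 _ hx) (ih2 _ hx)

theorem span_eq_top (hq0 : q ≠ 0) (u : Uqf q f) : u ∈ Sp q f := by
  obtain ⟨w, rfl⟩ := RingQuot.mkAlgHom_surjective ℂ (UqfRel q f) u
  have h := mul_mem_span (q := q) (f := f) hq0 w 1 (one_eq_mono ▸ mono_mem (0, 0, 0))
  rwa [mul_one] at h

end Span2

end Stmt8


/-- `U_q(f(K))` decomposes as a vector space as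
`U_q(F, K^{±1}) ⊗_ℂ U_q(E)`; equivalently the monomials `F^a K^b E^c` with
`a, c ≥ 0`, `b ∈ ℤ` form a `ℂ`-basis of `U_q(f(K))`. -/
theorem stmt8 (q : ℂ) (f : ℤ →₀ ℂ) (hq0 : q ≠ 0) (hq2 : q ^ 2 ≠ 1) :
    ∃ b : Module.Basis (ℕ × ℤ × ℕ) ℂ (Uqf q f),
      ∀ p : ℕ × ℤ × ℕ,
        b p = Fg q f ^ p.1 * lpow (Kg q f) (Kinvg q f) p.2.1 * Eg q f ^ p.2.2 := by
  have li : LinearIndependent ℂ (Stmt8.mono q f) := by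
    apply LinearIndependent.of_comp (Stmt8.π q f hq0)
    have he : (⇑(Stmt8.π q f hq0) ∘ Stmt8.mono q f) = fun p => Stmt8.δ p :=
      funext fun p => Stmt8.π_mono q f hq0 p
    rw [he, show (fun p => Stmt8.δ p) = ⇑(Finsupp.basisSingleOne (R := ℂ) (ι := ℕ × ℤ × ℕ)) from
      funext fun p => by simp [Stmt8.δ]]
    exact Module.Basis.linearIndependent _
  have hsp : ⊤ ≤ Submodule.span ℂ (Set.range (Stmt8.mono q f)) :=
    fun u _ => Stmt8.span_eq_top hq0 u
  exact ⟨Module.Basis.mk li hsp, fun p => by rw [Module.Basis.mk_apply]; rfl⟩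
end
end

section
/- Let η: U_q(E) → C be an algebra homomorphism with η(E) ≠ 0 and U_{q,η}(E) = ker η. Then U_q(f(K)) = U_q(F, K^{±1}) ⊕ U_q(f(K))·U_{q,η}(E) as a direct sum of vector spaces. -/
noncomputable section

namespace Stmt9

theorem lpow_units {A : Type*} [Monoid A] (u : Aˣ) (n : ℤ) :
    lpow (u : A) (↑u⁻¹ : A) n = ((u ^ n : Aˣ) : A) := by
  unfold lpow
  split_ifs with h
  · obtain ⟨m, rfl⟩ := Int.eq_ofNat_of_zero_le h
    simp [zpow_natCast]
  · push_neg at h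
    obtain ⟨m, rfl⟩ : ∃ m : ℕ, n = -m := ⟨(-n).toNat, by omega⟩
    rw [zpow_neg, zpow_natCast, ← inv_pow, Units.val_pow_eq_pow_val]
    simp

theorem map_lpow {F A B : Type*} [Monoid A] [Monoid B] [FunLike F A B] [MonoidHomClass F A B]
    (g : F) (x y : A) (n : ℤ) : g (lpow x y n) = lpow (g x) (g y) n := by
  unfold lpow; split_ifs <;> simp [map_pow]

variable (q : ℂ) (f : ℤ →₀ ℂ)

theorem rel_KE : Kg q f * Eg q f = q ^ 2 • (Eg q f * Kg q f) := by
  have h := RingQuot.mkAlgHom_rel ℂ (UqfRel.KE (q := q) (f := f))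
  simpa [Kg, Eg, map_mul, map_smul] using h

theorem rel_KF : Kg q f * Fg q f = (q ^ 2)⁻¹ • (Fg q f * Kg q f) := by
  have h := RingQuot.mkAlgHom_rel ℂ (UqfRel.KF (q := q) (f := f))
  simpa [Kg, Fg, map_mul, map_smul] using h

theorem rel_KKinv : Kg q f * Kinvg q f = 1 := by
  have h := RingQuot.mkAlgHom_rel ℂ (UqfRel.KKinv (q := q) (f := f))
  simpa [Kg, Kinvg, map_mul, map_one] using h

theorem rel_KinvK : Kinvg q f * Kg q f = 1 := by
  have h := RingQuot.mkAlgHom_rel ℂ (UqfRel.KinvK (q := q) (f := f))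
  simpa [Kg, Kinvg, map_mul, map_one] using h

theorem rel_EF : Eg q f * Fg q f - Fg q f * Eg q f
    = f.sum fun i c => c • lpow (Kg q f) (Kinvg q f) i := by
  have h := RingQuot.mkAlgHom_rel ℂ (UqfRel.EF (q := q) (f := f))
  simpa [Eg, Fg, Kg, Kinvg, map_sub, map_mul, map_finsuppSum, map_smul, map_lpow] using h

/-- `K` as a unit. -/
def Ku : (Uqf q f)ˣ := ⟨Kg q f, Kinvg q f, rel_KKinv q f, rel_KinvK q f⟩

def zq (q : ℂ) (n : ℤ) : ℂ := (q ^ 2) ^ n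

variable {q}

theorem zq_add (hq : q ≠ 0) (m n : ℤ) : zq q (m + n) = zq q m * zq q n :=
  zpow_add₀ (pow_ne_zero 2 hq) m n

theorem zq_one : zq q 1 = q ^ 2 := zpow_one _

theorem zq_zero : zq q 0 = 1 := rfl

theorem zq_neg_one : zq q (-1) = (q ^ 2)⁻¹ := by simp [zq]

theorem rel_FK (hq : q ≠ 0) : Fg q f * Kg q f = q ^ 2 • (Kg q f * Fg q f) := by
  rw [rel_KF q f, smul_smul, mul_inv_cancel₀ (pow_ne_zero 2 hq), one_smul]

theorem rel_EK (hq : q ≠ 0) : Eg q f * Kg q f = (q ^ 2)⁻¹ • (Kg q f * Eg q f) := by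
  rw [rel_KE q f, smul_smul, inv_mul_cancel₀ (pow_ne_zero 2 hq), one_smul]

theorem rel_KinvF (hq : q ≠ 0) : Kinvg q f * Fg q f = q ^ 2 • (Fg q f * Kinvg q f) := by
  calc Kinvg q f * Fg q f
      = Kinvg q f * Fg q f * (Kg q f * Kinvg q f) := by rw [rel_KKinv, mul_one]
    _ = Kinvg q f * (Fg q f * Kg q f) * Kinvg q f := by noncomm_ring
    _ = Kinvg q f * (q ^ 2 • (Kg q f * Fg q f)) * Kinvg q f := by rw [rel_FK f hq]
    _ = q ^ 2 • (Kinvg q f * Kg q f * (Fg q f * Kinvg q f)) := by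
        rw [mul_smul_comm, smul_mul_assoc]; noncomm_ring
    _ = q ^ 2 • (Fg q f * Kinvg q f) := by rw [rel_KinvK, one_mul]

theorem rel_EKinv : Eg q f * Kinvg q f = q ^ 2 • (Kinvg q f * Eg q f) := by
  calc Eg q f * Kinvg q f
      = Kinvg q f * Kg q f * (Eg q f * Kinvg q f) := by rw [rel_KinvK, one_mul]
    _ = Kinvg q f * (Kg q f * Eg q f) * Kinvg q f := by noncomm_ring
    _ = Kinvg q f * (q ^ 2 • (Eg q f * Kg q f)) * Kinvg q f := by rw [rel_KE]
    _ = q ^ 2 • (Kinvg q f * Eg q f * (Kg q f * Kinvg q f)) := by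
        rw [mul_smul_comm, smul_mul_assoc]; noncomm_ring
    _ = q ^ 2 • (Kinvg q f * Eg q f) := by rw [rel_KKinv, mul_one]


theorem units_zpow_comm {A : Type*} [Ring A] [Algebra ℂ A] (u : Aˣ) (g : A) {c : ℂ} (hc : c ≠ 0)
    (h1 : ↑u * g = c • (g * ↑u)) (h2 : ↑u⁻¹ * g = c⁻¹ • (g * ↑u⁻¹)) (n : ℤ) :
    ↑(u ^ n) * g = (c ^ n) • (g * ↑(u ^ n)) := by
  induction n using Int.induction_on with
  | zero => simp
  | succ n ih =>
      rw [zpow_add_one u (n : ℤ), Units.val_mul]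
      calc ↑(u ^ (n:ℤ)) * ↑u * g = ↑(u ^ (n:ℤ)) * (c • (g * ↑u)) := by rw [mul_assoc, h1]
        _ = c • (↑(u ^ (n:ℤ)) * g * ↑u) := by rw [mul_smul_comm, mul_assoc]
        _ = c • ((c ^ (n:ℤ) • (g * ↑(u ^ (n:ℤ)))) * ↑u) := by rw [ih]
        _ = (c ^ ((n:ℤ) + 1)) • (g * (↑(u ^ (n:ℤ)) * ↑u)) := by
            rw [smul_mul_assoc, smul_smul, mul_assoc, zpow_add_one₀ hc, mul_comm c]
  | pred n ih =>
      rw [show (-(n:ℤ) - 1) = (-(n:ℤ)) + (-1) by ring, zpow_add u, zpow_neg_one, Units.val_mul]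
      calc ↑(u ^ (-(n:ℤ))) * ↑u⁻¹ * g = ↑(u ^ (-(n:ℤ))) * (c⁻¹ • (g * ↑u⁻¹)) := by
            rw [mul_assoc, h2]
        _ = c⁻¹ • (↑(u ^ (-(n:ℤ))) * g * ↑u⁻¹) := by rw [mul_smul_comm, mul_assoc]
        _ = c⁻¹ • ((c ^ (-(n:ℤ)) • (g * ↑(u ^ (-(n:ℤ))))) * ↑u⁻¹) := by rw [ih]
        _ = (c ^ ((-(n:ℤ)) + (-1))) • (g * (↑(u ^ (-(n:ℤ))) * ↑u⁻¹)) := by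
            rw [smul_mul_assoc, smul_smul, mul_assoc, zpow_add₀ hc, zpow_neg_one, mul_comm c⁻¹]

theorem Kz_mul_F (hq : q ≠ 0) (n : ℤ) :
    ↑(Ku q f ^ n) * Fg q f = zq q (-n) • (Fg q f * ↑(Ku q f ^ n)) := by
  have h := units_zpow_comm (Ku q f) (Fg q f) (c := (q ^ 2)⁻¹)
    (inv_ne_zero (pow_ne_zero 2 hq)) (rel_KF q f)
    (by rw [inv_inv]; exact rel_KinvF f hq) n
  rw [h, zq, inv_zpow, zpow_neg]

theorem E_mul_Kz (hq : q ≠ 0) (n : ℤ) :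
    Eg q f * ↑(Ku q f ^ n) = zq q (-n) • (↑(Ku q f ^ n) * Eg q f) := by
  have h := units_zpow_comm (Ku q f) (Eg q f) (c := q ^ 2)
    (pow_ne_zero 2 hq) (rel_KE q f)
    (by show Kinvg q f * Eg q f = (q ^ 2)⁻¹ • (Eg q f * Kinvg q f)
        rw [rel_EKinv f, smul_smul, inv_mul_cancel₀ (pow_ne_zero 2 hq), one_smul]) n
  have h2 : Eg q f * ↑(Ku q f ^ n) = ((q^2) ^ n)⁻¹ • (((q^2)^n) • (Eg q f * ↑(Ku q f ^ n))) := by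
    rw [smul_smul, inv_mul_cancel₀ (zpow_ne_zero n (pow_ne_zero 2 hq)), one_smul]
  rw [h2, ← h]
  congr 1
  rw [zq, zpow_neg]


theorem Kz_mul_Fpow (hq : q ≠ 0) (n : ℤ) (a : ℕ) :
    ↑(Ku q f ^ n) * Fg q f ^ a = zq q (-(n * a)) • (Fg q f ^ a * ↑(Ku q f ^ n)) := by
  induction a with
  | zero => simp [zq_zero]
  | succ a ih =>
      calc ↑(Ku q f ^ n) * Fg q f ^ (a + 1)
          = (↑(Ku q f ^ n) * Fg q f) * Fg q f ^ a := by rw [pow_succ']; noncomm_ring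
        _ = zq q (-n) • (Fg q f * (↑(Ku q f ^ n) * Fg q f ^ a)) := by
            rw [Kz_mul_F f hq, smul_mul_assoc, mul_assoc]
        _ = (zq q (-n) * zq q (-(n * a))) • (Fg q f ^ (a+1) * ↑(Ku q f ^ n)) := by
            rw [ih, mul_smul_comm, smul_smul, pow_succ']
            congr 1
            noncomm_ring
        _ = zq q (-(n * (a+1))) • (Fg q f ^ (a+1) * ↑(Ku q f ^ n)) := by
            rw [← zq_add hq]
            congr 1
            push_cast
            noncomm_ring

/-- Monomials `F^a K^b`. -/
def mon (q : ℂ) (f : ℤ →₀ ℂ) (p : ℕ × ℤ) : Uqf q f := Fg q f ^ p.1 * ↑(Ku q f ^ p.2)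

theorem mon_mul (hq : q ≠ 0) (p r : ℕ × ℤ) :
    mon q f p * mon q f r = zq q (-(p.2 * r.1)) • mon q f (p.1 + r.1, p.2 + r.2) := by
  obtain ⟨a, b⟩ := p; obtain ⟨c, d⟩ := r
  calc mon q f (a, b) * mon q f (c, d)
      = Fg q f ^ a * (↑(Ku q f ^ b) * Fg q f ^ c) * ↑(Ku q f ^ d) := by
        unfold mon; dsimp only; noncomm_ring
    _ = zq q (-(b * c)) • (Fg q f ^ a * (Fg q f ^ c * ↑(Ku q f ^ b)) * ↑(Ku q f ^ d)) := by
        rw [Kz_mul_Fpow f hq, mul_smul_comm, smul_mul_assoc]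
    _ = zq q (-(b * c)) • mon q f (a + c, b + d) := by
        unfold mon; dsimp only
        rw [pow_add, zpow_add, Units.val_mul]
        congr 1
        noncomm_ring

/-- The subalgebra `U_q(F, K^{±1})`. -/
abbrev B (q : ℂ) (f : ℤ →₀ ℂ) : Subalgebra ℂ (Uqf q f) :=
  Algebra.adjoin ℂ ({Fg q f, Kg q f, Kinvg q f} : Set (Uqf q f))

theorem F_mem_B : Fg q f ∈ B q f := Algebra.subset_adjoin (by simp)
theorem K_mem_B : Kg q f ∈ B q f := Algebra.subset_adjoin (by simp)
theorem Kinv_mem_B : Kinvg q f ∈ B q f := Algebra.subset_adjoin (by simp)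

theorem Kz_mem_B (n : ℤ) : (↑(Ku q f ^ n) : Uqf q f) ∈ B q f := by
  rw [show ((Ku q f ^ n : (Uqf q f)ˣ) : Uqf q f) = lpow (Kg q f) (Kinvg q f) n from
    (lpow_units (Ku q f) n).symm]
  unfold lpow
  split_ifs
  · exact pow_mem (K_mem_B f) _
  · exact pow_mem (Kinv_mem_B f) _

theorem mon_mem_B (p : ℕ × ℤ) : mon q f p ∈ B q f :=
  mul_mem (pow_mem (F_mem_B f) _) (Kz_mem_B f _)

theorem fK_mem_B : (f.sum fun i c => c • lpow (Kg q f) (Kinvg q f) i) ∈ B q f := by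
  rw [Finsupp.sum]
  apply sum_mem
  intro i _
  apply Subalgebra.smul_mem
  unfold lpow
  split_ifs
  · exact pow_mem (K_mem_B f) _
  · exact pow_mem (Kinv_mem_B f) _

theorem E_mul_Fpow (a : ℕ) : ∃ D ∈ B q f,
    Eg q f * Fg q f ^ a = Fg q f ^ a * Eg q f + D := by
  induction a with
  | zero => exact ⟨0, zero_mem _, by simp⟩
  | succ a ih =>
      obtain ⟨D, hD, hE⟩ := ih
      refine ⟨Fg q f ^ a * (f.sum fun i c => c • lpow (Kg q f) (Kinvg q f) i) + D * Fg q f,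
        add_mem (mul_mem (pow_mem (F_mem_B f) _) (fK_mem_B f)) (mul_mem hD (F_mem_B f)), ?_⟩
      have hEF : Eg q f * Fg q f
          = Fg q f * Eg q f + f.sum fun i c => c • lpow (Kg q f) (Kinvg q f) i := by
        rw [← rel_EF q f]; noncomm_ring
      calc Eg q f * Fg q f ^ (a + 1)
          = (Eg q f * Fg q f ^ a) * Fg q f := by rw [pow_succ]; noncomm_ring
        _ = Fg q f ^ a * (Eg q f * Fg q f) + D * Fg q f := by rw [hE]; noncomm_ring
        _ = _ := by rw [hEF, pow_succ]; noncomm_ring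

theorem E_mul_mon (hq : q ≠ 0) (p : ℕ × ℤ) : ∃ D ∈ B q f,
    Eg q f * mon q f p = zq q (-p.2) • (mon q f p * Eg q f) + D := by
  obtain ⟨a, b⟩ := p
  obtain ⟨D, hD, hE⟩ := E_mul_Fpow f a
  refine ⟨D * ↑(Ku q f ^ b), mul_mem hD (Kz_mem_B f b), ?_⟩
  calc Eg q f * mon q f (a, b)
      = (Eg q f * Fg q f ^ a) * ↑(Ku q f ^ b) := by unfold mon; dsimp only; noncomm_ring
    _ = Fg q f ^ a * (Eg q f * ↑(Ku q f ^ b)) + D * ↑(Ku q f ^ b) := by rw [hE]; noncomm_ring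
    _ = zq q (-b) • (mon q f (a, b) * Eg q f) + D * ↑(Ku q f ^ b) := by
        rw [E_mul_Kz f hq, mul_smul_comm]
        unfold mon; dsimp only
        congr 2
        noncomm_ring


/-- The span of the monomials. -/
def Bm (q : ℂ) (f : ℤ →₀ ℂ) : Submodule ℂ (Uqf q f) := Submodule.span ℂ (Set.range (mon q f))

theorem mon_mem_Bm (p : ℕ × ℤ) : mon q f p ∈ Bm q f := Submodule.subset_span ⟨p, rfl⟩

theorem one_mem_Bm : (1 : Uqf q f) ∈ Bm q f := by
  have h : mon q f (0, 0) = 1 := by unfold mon; simp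
  rw [← h]; exact mon_mem_Bm f _

theorem Bm_mul (hq : q ≠ 0) : ∀ x ∈ Bm q f, ∀ y ∈ Bm q f, x * y ∈ Bm q f := by
  intro x hx y hy
  induction hx using Submodule.span_induction with
  | mem x hxm =>
      induction hy using Submodule.span_induction with
      | mem y hym =>
          obtain ⟨p, rfl⟩ := hxm; obtain ⟨r, rfl⟩ := hym
          rw [mon_mul f hq]
          exact Submodule.smul_mem _ _ (mon_mem_Bm f _)
      | zero => simp
      | add a b _ _ ha hb => rw [mul_add]; exact add_mem ha hb
      | smul c a _ ha => rw [mul_smul_comm]; exact Submodule.smul_mem _ _ ha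
  | zero => rw [zero_mul]; exact zero_mem _
  | add a b _ _ ha hb => rw [add_mul]; exact add_mem ha hb
  | smul c a _ ha => rw [smul_mul_assoc]; exact Submodule.smul_mem _ _ ha

theorem F_eq_mon : Fg q f = mon q f (1, 0) := by unfold mon; simp
theorem K_eq_mon : Kg q f = mon q f (0, 1) := by unfold mon; simp; rfl
theorem Kinv_eq_mon : Kinvg q f = mon q f (0, -1) := by unfold mon; simp; rfl

theorem B_le_Bm (hq : q ≠ 0) : ∀ x ∈ B q f, x ∈ Bm q f := by
  intro x hx
  induction hx using Algebra.adjoin_induction with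
  | mem x hxs =>
      rcases hxs with h | h | h
      · rw [h, F_eq_mon]; exact mon_mem_Bm f _
      · rw [h, K_eq_mon]; exact mon_mem_Bm f _
      · rw [h, Kinv_eq_mon]; exact mon_mem_Bm f _
  | algebraMap r =>
      rw [Algebra.algebraMap_eq_smul_one]
      exact Submodule.smul_mem _ _ (one_mem_Bm f)
  | add a b _ _ ha hb => exact add_mem ha hb
  | mul a b _ _ ha hb => exact Bm_mul f hq _ ha _ hb


/-- The module realizing `U_q(f(K))/U_q(f(K))·ker η`. -/
abbrev M : Type := (ℕ × ℤ) →₀ ℂ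

def e (a : ℕ) (b : ℤ) : M := Finsupp.single (a, b) 1

def opOf (g : ℕ × ℤ → M) : M →ₗ[ℂ] M :=
  Finsupp.lsum ℂ fun p => LinearMap.toSpanSingleton ℂ M (g p)

theorem opOf_single (g : ℕ × ℤ → M) (p : ℕ × ℤ) (c : ℂ) :
    opOf g (Finsupp.single p c) = c • g p := by
  simp [opOf, LinearMap.toSpanSingleton_apply]

theorem opOf_e (g : ℕ × ℤ → M) (a : ℕ) (b : ℤ) : opOf g (e a b) = g (a, b) := by
  rw [e, opOf_single, one_smul]

theorem end_ext {φ ψ : Module.End ℂ M} (h : ∀ a b, φ (e a b) = ψ (e a b)) : φ = ψ := by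
  apply Finsupp.lhom_ext
  rintro ⟨a, b⟩ c
  have hs : (Finsupp.single (a, b) c : M) = c • e a b := by
    rw [e, Finsupp.smul_single, smul_eq_mul, mul_one]
  rw [hs, map_smul, map_smul, h]

def opF : Module.End ℂ M := opOf fun p => e (p.1 + 1) p.2

def opK (q : ℂ) : Module.End ℂ M := opOf fun p => zq q (-(p.1 : ℤ)) • e p.1 (p.2 + 1)

def opKinv (q : ℂ) : Module.End ℂ M := opOf fun p => zq q (p.1 : ℤ) • e p.1 (p.2 - 1)

def opE (q : ℂ) (f : ℤ →₀ ℂ) (lam : ℂ) : Module.End ℂ M := opOf fun p =>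
  (lam * zq q (-p.2)) • e p.1 p.2 +
    ∑ j ∈ Finset.range p.1, f.sum fun i c => (c * zq q (-(i * j))) • e (p.1 - 1) (p.2 + i)

theorem opF_e (a : ℕ) (b : ℤ) : opF (e a b) = e (a + 1) b := opOf_e _ a b
theorem opK_e (a : ℕ) (b : ℤ) : opK q (e a b) = zq q (-(a : ℤ)) • e a (b + 1) := opOf_e _ a b
theorem opKinv_e (a : ℕ) (b : ℤ) : opKinv q (e a b) = zq q (a : ℤ) • e a (b - 1) := opOf_e _ a b
theorem opE_e (lam : ℂ) (a : ℕ) (b : ℤ) : opE q f lam (e a b) =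
    (lam * zq q (-b)) • e a b +
      ∑ j ∈ Finset.range a, f.sum fun i c => (c * zq q (-(i * j))) • e (a - 1) (b + i) :=
  opOf_e _ a b

theorem endKKinv (hq : q ≠ 0) : opK q * opKinv q = 1 := by
  apply end_ext
  intro a b
  rw [Module.End.mul_apply, opKinv_e, map_smul, opK_e, Module.End.one_apply, smul_smul,
    ← zq_add hq, add_neg_cancel, zq_zero, one_smul, sub_add_cancel]

theorem endKinvK (hq : q ≠ 0) : opKinv q * opK q = 1 := by
  apply end_ext
  intro a b
  rw [Module.End.mul_apply, opK_e, map_smul, opKinv_e, Module.End.one_apply, smul_smul,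
    ← zq_add hq, neg_add_cancel, zq_zero, one_smul, add_sub_cancel_right]

theorem endKF (hq : q ≠ 0) : opK q * opF = (q ^ 2)⁻¹ • (opF * opK q) := by
  apply end_ext
  intro a b
  rw [Module.End.mul_apply, opF_e, opK_e, LinearMap.smul_apply, Module.End.mul_apply,
    opK_e, map_smul, opF_e, smul_smul]
  congr 1
  rw [show -((a + 1 : ℕ) : ℤ) = (-1) + (-(a : ℤ)) by push_cast; ring, zq_add hq, zq_neg_one]


theorem endKE (hq : q ≠ 0) (f : ℤ →₀ ℂ) (lam : ℂ) :
    opK q * opE q f lam = q ^ 2 • (opE q f lam * opK q) := by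
  apply end_ext
  intro a b
  rw [Module.End.mul_apply, LinearMap.smul_apply, Module.End.mul_apply, opE_e, opK_e,
    map_add, map_smul, opK_e, map_sum, map_smul, opE_e]
  simp only [map_finsuppSum, map_smul, opK_e, smul_smul, smul_add, Finset.smul_sum,
    Finsupp.smul_sum]
  congr 1
  · congr 1
    rw [show -(b + 1) = (-1) + (-b) by ring, zq_add hq, zq_neg_one]
    field_simp
  · apply Finset.sum_congr rfl
    intro j hj
    have hj' := Finset.mem_range.mp hj
    apply Finsupp.sum_congr
    intro i _
    have ha : (((a - 1 : ℕ)) : ℤ) = (a : ℤ) - 1 := by omega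
    rw [show b + (i : ℤ) + 1 = b + 1 + i by ring, ha,
      show -((a : ℤ) - 1) = (-(a : ℤ)) + 1 by ring, zq_add hq, zq_one]
    congr 1
    ring

def opKu (q : ℂ) (hq : q ≠ 0) : (Module.End ℂ M)ˣ :=
  ⟨opK q, opKinv q, endKKinv hq, endKinvK hq⟩

theorem opKz_e (hq : q ≠ 0) (n : ℤ) (a : ℕ) (b : ℤ) :
    (↑(opKu q hq ^ n) : Module.End ℂ M) (e a b) = zq q (-(a * n)) • e a (b + n) := by
  induction n using Int.induction_on generalizing b with
  | zero => simp [zq_zero]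
  | succ n ih =>
      rw [zpow_add_one, Units.val_mul, Module.End.mul_apply,
        show ((opKu q hq : (Module.End ℂ M)ˣ) : Module.End ℂ M) = opK q from rfl, opK_e,
        map_smul, ih, smul_smul, ← zq_add hq]
      rw [show b + 1 + (n : ℤ) = b + ((n : ℤ) + 1) by ring]
      congr 2
      push_cast
      ring
  | pred n ih =>
      rw [show (-(n : ℤ) - 1) = (-(n : ℤ)) + (-1) by ring, zpow_add, zpow_neg_one,
        Units.val_mul, Module.End.mul_apply,
        show (((opKu q hq)⁻¹ : (Module.End ℂ M)ˣ) : Module.End ℂ M) = opKinv q from rfl,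
        opKinv_e, map_smul, ih, smul_smul, ← zq_add hq]
      rw [show b - 1 + (-(n : ℤ)) = b + (-(n : ℤ) + -1) by ring]
      congr 2
      push_cast
      ring

theorem lpow_op_e (hq : q ≠ 0) (n : ℤ) (a : ℕ) (b : ℤ) :
    lpow (opK q) (opKinv q) n (e a b) = zq q (-(a * n)) • e a (b + n) := by
  rw [show opK q = ((opKu q hq : (Module.End ℂ M)ˣ) : Module.End ℂ M) from rfl,
    show opKinv q = (((opKu q hq)⁻¹ : (Module.End ℂ M)ˣ) : Module.End ℂ M) from rfl,
    lpow_units]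
  exact opKz_e hq n a b

theorem endEF (hq : q ≠ 0) (f : ℤ →₀ ℂ) (lam : ℂ) :
    opE q f lam * opF - opF * opE q f lam
      = f.sum fun i c => c • lpow (opK q) (opKinv q) i := by
  apply end_ext
  intro a b
  rw [LinearMap.sub_apply, Module.End.mul_apply, Module.End.mul_apply, opF_e, opE_e, opE_e,
    map_add, map_smul, opF_e, map_sum]
  simp only [map_finsuppSum, map_smul, opF_e, Nat.add_sub_cancel]
  rcases Nat.eq_zero_or_pos a with rfl | hpos
  · simp only [Finset.range_zero, Finset.sum_empty, add_zero, Finset.sum_range_one,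
      Nat.cast_zero, mul_zero, neg_zero, zq_zero, mul_one]
    rw [add_sub_cancel_left]
    simp only [Finsupp.sum, LinearMap.sum_apply, LinearMap.smul_apply, lpow_op_e hq,
      Nat.cast_zero, zero_mul, neg_zero, zq_zero, one_smul, zero_add, Finset.sum_range_one,
      mul_zero, mul_one]
  · rw [Nat.sub_add_cancel hpos, Finset.sum_range_succ, ← add_assoc,
      add_sub_cancel_left]
    simp only [Finsupp.sum, LinearMap.sum_apply, LinearMap.smul_apply, lpow_op_e hq, smul_smul]
    apply Finset.sum_congr rfl
    intro i _
    ring_nf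


def gmap (q : ℂ) (f : ℤ →₀ ℂ) (lam : ℂ) : UqGen → Module.End ℂ M
  | .E => opE q f lam
  | .F => opF
  | .K => opK q
  | .Kinv => opKinv q

def rho (q : ℂ) (f : ℤ →₀ ℂ) (hq : q ≠ 0) (lam : ℂ) : Uqf q f →ₐ[ℂ] Module.End ℂ M :=
  RingQuot.liftAlgHom ℂ ⟨FreeAlgebra.lift ℂ (gmap q f lam), by
    intro x y h
    cases h with
    | KE =>
        simp only [map_mul, map_smul, FreeAlgebra.lift_ι_apply, gmap]
        exact endKE hq f lam
    | KF =>
        simp only [map_mul, map_smul, FreeAlgebra.lift_ι_apply, gmap]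
        exact endKF hq
    | KKinv =>
        simp only [map_mul, map_one, FreeAlgebra.lift_ι_apply, gmap]
        exact endKKinv hq
    | KinvK =>
        simp only [map_mul, map_one, FreeAlgebra.lift_ι_apply, gmap]
        exact endKinvK hq
    | EF =>
        simp only [map_sub, map_mul, map_finsuppSum, map_smul, map_lpow,
          FreeAlgebra.lift_ι_apply, gmap]
        exact endEF hq f lam⟩

theorem rho_E (hq : q ≠ 0) (lam : ℂ) : rho q f hq lam (Eg q f) = opE q f lam := by
  rw [Eg, rho, RingQuot.liftAlgHom_mkAlgHom_apply, FreeAlgebra.lift_ι_apply]; rfl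
theorem rho_F (hq : q ≠ 0) (lam : ℂ) : rho q f hq lam (Fg q f) = opF := by
  rw [Fg, rho, RingQuot.liftAlgHom_mkAlgHom_apply, FreeAlgebra.lift_ι_apply]; rfl
theorem rho_K (hq : q ≠ 0) (lam : ℂ) : rho q f hq lam (Kg q f) = opK q := by
  rw [Kg, rho, RingQuot.liftAlgHom_mkAlgHom_apply, FreeAlgebra.lift_ι_apply]; rfl
theorem rho_Kinv (hq : q ≠ 0) (lam : ℂ) : rho q f hq lam (Kinvg q f) = opKinv q := by
  rw [Kinvg, rho, RingQuot.liftAlgHom_mkAlgHom_apply, FreeAlgebra.lift_ι_apply]; rfl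

theorem opF_pow (a c : ℕ) (b : ℤ) : (opF ^ a) (e c b) = e (c + a) b := by
  induction a generalizing c with
  | zero => simp
  | succ a ih =>
      rw [pow_succ', Module.End.mul_apply, ih, opF_e, add_assoc]

theorem rho_mon (hq : q ≠ 0) (lam : ℂ) (p : ℕ × ℤ) :
    rho q f hq lam (mon q f p) (e 0 0) = e p.1 p.2 := by
  obtain ⟨a, b⟩ := p
  have hlp : ((Ku q f ^ b : (Uqf q f)ˣ) : Uqf q f) = lpow (Kg q f) (Kinvg q f) b :=
    (lpow_units (Ku q f) b).symm
  rw [mon, hlp, map_mul, map_pow, map_lpow, rho_F f hq, rho_K f hq, rho_Kinv f hq,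
    Module.End.mul_apply, lpow_op_e hq]
  simp only [Nat.cast_zero, zero_mul, neg_zero, zq_zero, one_smul, zero_add, opF_pow]


theorem rho_vac (hq : q ≠ 0) (η : ↥(Algebra.adjoin ℂ ({Eg q f} : Set (Uqf q f))) →ₐ[ℂ] ℂ)
    (x : Uqf q f) (hx : x ∈ Algebra.adjoin ℂ ({Eg q f} : Set (Uqf q f))) :
    rho q f hq (η ⟨Eg q f, Algebra.subset_adjoin (Set.mem_singleton _)⟩) x (e 0 0)
      = η ⟨x, hx⟩ • e 0 0 := by
  induction hx using Algebra.adjoin_induction with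
  | mem y hys =>
      rcases Set.mem_singleton_iff.mp hys with rfl
      rw [rho_E f hq, opE_e]
      simp [zq_zero]
  | algebraMap r =>
      rw [AlgHom.commutes, Module.algebraMap_end_apply]
      have h2 : η ⟨algebraMap ℂ (Uqf q f) r, Subalgebra.algebraMap_mem _ r⟩ = r := by
        exact_mod_cast AlgHom.commutes η r
      rw [h2]
  | add x y hx hy ihx ihy =>
      rw [map_add, LinearMap.add_apply, ihx, ihy, ← add_smul]
      congr 1
      exact (map_add η ⟨x, hx⟩ ⟨y, hy⟩).symm
  | mul x y hx hy ihx ihy =>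
      rw [map_mul, Module.End.mul_apply, ihy, map_smul, ihx, smul_smul]
      congr 1
      rw [mul_comm]
      exact (map_mul η ⟨x, hx⟩ ⟨y, hy⟩).symm

theorem T_inj (hq : q ≠ 0) (lam : ℂ) {x : Uqf q f} (hx : x ∈ Bm q f)
    (hT : rho q f hq lam x (e 0 0) = 0) : x = 0 := by
  rw [Bm] at hx
  obtain ⟨c, rfl⟩ := Finsupp.mem_span_range_iff_exists_finsupp.mp hx
  have hc : (rho q f hq lam (c.sum fun p r => r • mon q f p)) (e 0 0) = c := by
    rw [map_finsuppSum]
    rw [Finsupp.sum, LinearMap.sum_apply]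
    have : ∀ p ∈ c.support, (rho q f hq lam (c p • mon q f p)) (e 0 0)
        = Finsupp.single p (c p) := by
      intro p _
      rw [map_smul, LinearMap.smul_apply, rho_mon f hq]
      rw [show e p.1 p.2 = Finsupp.single p 1 by rw [e]]
      rw [Finsupp.smul_single, smul_eq_mul, mul_one]
    rw [Finset.sum_congr rfl this]
    exact Finsupp.sum_single c
  rw [hc] at hT
  rw [hT]
  simp


theorem adjoin_gens_top :
    Algebra.adjoin ℂ ({Eg q f, Fg q f, Kg q f, Kinvg q f} : Set (Uqf q f)) = ⊤ := by
  rw [eq_top_iff]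
  rintro x -
  obtain ⟨y, rfl⟩ := RingQuot.mkAlgHom_surjective ℂ (UqfRel q f) x
  induction y using FreeAlgebra.induction with
  | grade0 r => rw [AlgHom.commutes]; exact Subalgebra.algebraMap_mem _ r
  | grade1 g =>
      cases g
      · exact Algebra.subset_adjoin (by simp [Eg])
      · exact Algebra.subset_adjoin (by simp [Fg])
      · exact Algebra.subset_adjoin (by simp [Kg])
      · exact Algebra.subset_adjoin (by simp [Kinvg])
  | mul a b ha hb => rw [map_mul]; exact mul_mem ha hb
  | add a b ha hb => rw [map_add]; exact add_mem ha hb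

end Stmt9

open Stmt9

/-- Let `η : U_q(E) → ℂ` be an algebra homomorphism with `η(E) ≠ 0`, and
`U_{q,η}(E) = ker η`. Then `U_q(f(K)) = U_q(F, K^{±1}) ⊕ U_q(f(K))·U_{q,η}(E)` as a
direct sum of vector spaces. Here `U_q(E) = Algebra.adjoin ℂ {E}` and
`U_q(F, K^{±1}) = Algebra.adjoin ℂ {F, K, K⁻¹}`. -/
theorem stmt9 (q : ℂ) (f : ℤ →₀ ℂ) (hq0 : q ≠ 0) (hq2 : q ^ 2 ≠ 1)
    (η : ↥(Algebra.adjoin ℂ ({Eg q f} : Set (Uqf q f))) →ₐ[ℂ] ℂ)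
    (hη : η ⟨Eg q f, Algebra.subset_adjoin (Set.mem_singleton _)⟩ ≠ 0) :
    IsCompl
      (Subalgebra.toSubmodule (Algebra.adjoin ℂ ({Fg q f, Kg q f, Kinvg q f} : Set (Uqf q f))))
      (Submodule.span ℂ {z : Uqf q f |
        ∃ (u : Uqf q f) (x : ↥(Algebra.adjoin ℂ ({Eg q f} : Set (Uqf q f)))),
          η x = 0 ∧ z = u * (x : Uqf q f)}) := by
  set lam : ℂ := η ⟨Eg q f, Algebra.subset_adjoin (Set.mem_singleton _)⟩ with hlam
  set J : Submodule ℂ (Uqf q f) := Submodule.span ℂ {z : Uqf q f |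
        ∃ (u : Uqf q f) (x : ↥(Algebra.adjoin ℂ ({Eg q f} : Set (Uqf q f)))),
          η x = 0 ∧ z = u * (x : Uqf q f)} with hJ
  constructor
  · -- disjointness
    rw [Submodule.disjoint_def]
    intro x hxB hxJ
    have hT : rho q f hq0 lam x (e 0 0) = 0 := by
      refine Submodule.span_induction ?_ ?_ ?_ ?_ hxJ
      · rintro z ⟨u, xx, hxx, rfl⟩
        rw [map_mul, Module.End.mul_apply, rho_vac f hq0 η _ xx.2]
        rw [show (⟨(xx : Uqf q f), xx.2⟩ : ↥(Algebra.adjoin ℂ ({Eg q f} : Set (Uqf q f)))) = xx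
          from rfl, hxx]
        simp
      · simp
      · intro a b _ _ ha hb; rw [map_add, LinearMap.add_apply, ha, hb, add_zero]
      · intro r a _ ha; rw [map_smul, LinearMap.smul_apply, ha, smul_zero]
    exact T_inj f hq0 lam (B_le_Bm f hq0 x ((Subalgebra.mem_toSubmodule _).mp hxB)) hT
  · -- codisjointness
    rw [codisjoint_iff, eq_top_iff]
    set W : Submodule ℂ (Uqf q f) := Subalgebra.toSubmodule (B q f) ⊔ J with hW
    have hJleft : ∀ (u : Uqf q f), ∀ z ∈ J, u * z ∈ J := by
      intro u z hz
      refine Submodule.span_induction ?_ ?_ ?_ ?_ hz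
      · rintro z ⟨u', xx, hxx, rfl⟩
        refine Submodule.subset_span ⟨u * u', xx, hxx, ?_⟩
        rw [mul_assoc]
      · rw [mul_zero]; exact zero_mem _
      · intro a b _ _ ha hb; rw [mul_add]; exact add_mem ha hb
      · intro r a _ ha; rw [mul_smul_comm]; exact Submodule.smul_mem _ _ ha
    have hEB : ∀ b ∈ Bm q f, Eg q f * b ∈ W := by
      intro b hb
      refine Submodule.span_induction ?_ ?_ ?_ ?_ hb
      · rintro z ⟨p, rfl⟩
        obtain ⟨D, hD, hE⟩ := E_mul_mon f hq0 p
        rw [hE]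
        refine add_mem (Submodule.smul_mem _ _ ?_)
          (Submodule.mem_sup_left ((Subalgebra.mem_toSubmodule _).mpr hD))
        have hsplit : mon q f p * Eg q f
            = mon q f p * (Eg q f - algebraMap ℂ (Uqf q f) lam) + lam • mon q f p := by
          rw [mul_sub, Algebra.algebraMap_eq_smul_one, mul_smul_comm, mul_one]
          abel
        rw [hsplit]
        refine add_mem (Submodule.mem_sup_right ?_)
          (Submodule.mem_sup_left
            ((Subalgebra.mem_toSubmodule _).mpr (Subalgebra.smul_mem _ (mon_mem_B f p) lam)))
        refine Submodule.subset_span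
          ⟨mon q f p,
            ⟨Eg q f, Algebra.subset_adjoin (Set.mem_singleton _)⟩ - algebraMap ℂ _ lam,
            ?_, ?_⟩
        · rw [map_sub η, AlgHom.commutes]; simp [hlam]
        · rfl
      · rw [mul_zero]; exact zero_mem _
      · intro a b _ _ ha hb; rw [mul_add]; exact add_mem ha hb
      · intro r a _ ha; rw [mul_smul_comm]; exact Submodule.smul_mem _ _ ha
    let P : Subalgebra ℂ (Uqf q f) :=
      { carrier := {u : Uqf q f | ∀ w ∈ W, u * w ∈ W}
        mul_mem' := fun hx hy w hw => by rw [mul_assoc]; exact hx _ (hy _ hw)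
        one_mem' := fun w hw => by rwa [one_mul]
        add_mem' := fun hx hy w hw => by rw [add_mul]; exact add_mem (hx _ hw) (hy _ hw)
        zero_mem' := fun w hw => by rw [zero_mul]; exact zero_mem _
        algebraMap_mem' := fun r w hw => by
          rw [Algebra.algebraMap_eq_smul_one, smul_mul_assoc, one_mul]
          exact Submodule.smul_mem _ _ hw }
    have hgen : ({Eg q f, Fg q f, Kg q f, Kinvg q f} : Set (Uqf q f)) ⊆ (P : Set (Uqf q f)) := by
      rintro g (rfl | rfl | rfl | rfl) <;> intro w hw <;>
        obtain ⟨b, hb, z, hz, rfl⟩ := Submodule.mem_sup.mp hw <;> rw [mul_add]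
      · exact add_mem (hEB b (B_le_Bm f hq0 b ((Subalgebra.mem_toSubmodule _).mp hb)))
          (Submodule.mem_sup_right (hJleft _ _ hz))
      · exact add_mem
          (Submodule.mem_sup_left
            ((Subalgebra.mem_toSubmodule _).mpr
              (mul_mem (F_mem_B f) ((Subalgebra.mem_toSubmodule _).mp hb))))
          (Submodule.mem_sup_right (hJleft _ _ hz))
      · exact add_mem
          (Submodule.mem_sup_left
            ((Subalgebra.mem_toSubmodule _).mpr
              (mul_mem (K_mem_B f) ((Subalgebra.mem_toSubmodule _).mp hb))))
          (Submodule.mem_sup_right (hJleft _ _ hz))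
      · exact add_mem
          (Submodule.mem_sup_left
            ((Subalgebra.mem_toSubmodule _).mpr
              (mul_mem (Kinv_mem_B f) ((Subalgebra.mem_toSubmodule _).mp hb))))
          (Submodule.mem_sup_right (hJleft _ _ hz))
    have hPtop : (⊤ : Subalgebra ℂ (Uqf q f)) ≤ P := by
      rw [← adjoin_gens_top f]
      exact Algebra.adjoin_le hgen
    rintro x -
    have hx : x ∈ P := hPtop trivial
    have h1W : (1 : Uqf q f) ∈ W := Submodule.mem_sup_left ((Subalgebra.mem_toSubmodule _).mpr
      (one_mem (B q f)))
    simpa using hx 1 h1W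
end
end

section
/- Let V be a Whittaker module for U_q(f_m(K)) admitting a central character (i.e., Z_V is a maximal ideal of C[Ω]). Then V is irreducible, and conversely every irreducible Whittaker module admits a central character; moreover in this case the space of Whittaker vectors of V is one-dimensional. -/
noncomputable section

namespace Stmt17

variable (q : ℂ) (m : ℕ)

theorem rel_KE : Kgen q m * Egen q m = q ^ 2 • (Egen q m * Kgen q m) := by
  have := RingQuot.mkAlgHom_rel ℂ (UqRel.KE (q := q) (m := m))
  simpa [Egen, Kgen, map_mul, map_smul] using this

theorem rel_KF : Kgen q m * Fgen q m = (q ^ 2)⁻¹ • (Fgen q m * Kgen q m) := by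
  have := RingQuot.mkAlgHom_rel ℂ (UqRel.KF (q := q) (m := m))
  simpa [Fgen, Kgen, map_mul, map_smul] using this

theorem rel_KKinv : Kgen q m * Kinvgen q m = 1 := by
  have := RingQuot.mkAlgHom_rel ℂ (UqRel.KKinv (q := q) (m := m))
  simpa [Kinvgen, Kgen, map_mul] using this

theorem rel_KinvK : Kinvgen q m * Kgen q m = 1 := by
  have := RingQuot.mkAlgHom_rel ℂ (UqRel.KinvK (q := q) (m := m))
  simpa [Kinvgen, Kgen, map_mul] using this

theorem rel_EF : Egen q m * Fgen q m - Fgen q m * Egen q m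
    = (q - q⁻¹)⁻¹ • (Kgen q m ^ m - Kinvgen q m ^ m) := by
  have := RingQuot.mkAlgHom_rel ℂ (UqRel.EF (q := q) (m := m))
  simpa [Egen, Fgen, Kgen, Kinvgen, map_mul, map_smul, map_sub, map_pow] using this

/-- K as a unit. -/
def uK : (Uq q m)ˣ := ⟨Kgen q m, Kinvgen q m, rel_KKinv q m, rel_KinvK q m⟩

end Stmt17
section Comm
variable {A : Type*} [Ring A] [Algebra ℂ A]

theorem pow_comm_left {x g : A} {s : ℂ} (h : x * g = s • (g * x)) :
    ∀ n : ℕ, x ^ n * g = s ^ n • (g * x ^ n)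
  | 0 => by simp
  | (n+1) => by
    calc x ^ (n+1) * g = x ^ n * (x * g) := by rw [pow_succ, mul_assoc]
    _ = s • (x ^ n * g * x) := by rw [h, mul_smul_comm, mul_assoc]
    _ = s • ((s ^ n • (g * x ^ n)) * x) := by rw [pow_comm_left h n]
    _ = (s ^ (n+1)) • (g * x ^ (n+1)) := by
        rw [smul_mul_assoc, smul_smul, pow_succ, mul_assoc, mul_comm s, pow_succ]

theorem inv_comm_left {u : Aˣ} {g : A} {s : ℂ} (hs : s ≠ 0)
    (h : (u : A) * g = s • (g * (u : A))) :
    ((u⁻¹ : Aˣ) : A) * g = s⁻¹ • (g * ((u⁻¹ : Aˣ) : A)) := by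
  have key : g * ((u⁻¹ : Aˣ) : A) = s • (((u⁻¹ : Aˣ) : A) * g) := by
    calc g * ((u⁻¹ : Aˣ) : A)
        = ((u⁻¹ : Aˣ) : A) * ((u : A) * g) * ((u⁻¹ : Aˣ) : A) := by
          rw [← mul_assoc, Units.inv_mul, one_mul]
    _ = s • (((u⁻¹ : Aˣ) : A) * g * ((u : A) * ((u⁻¹ : Aˣ) : A))) := by
          rw [h, mul_smul_comm, smul_mul_assoc, mul_assoc, mul_assoc, mul_assoc]
    _ = s • (((u⁻¹ : Aˣ) : A) * g) := by rw [Units.mul_inv, mul_one]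
  rw [key, smul_smul, inv_mul_cancel₀ hs, one_smul]

theorem zpow_comm_left {u : Aˣ} {g : A} {s : ℂ} (hs : s ≠ 0)
    (h : (u : A) * g = s • (g * (u : A))) (n : ℤ) :
    ((u ^ n : Aˣ) : A) * g = (s ^ n) • (g * ((u ^ n : Aˣ) : A)) := by
  induction n using Int.induction_on with
  | zero => simp
  | succ n ih =>
      have : ((u ^ ((n : ℤ) + 1) : Aˣ) : A) = ((u ^ (n : ℤ) : Aˣ) : A) * (u : A) := by
        rw [zpow_add_one, Units.val_mul]
      rw [this, mul_assoc, h, mul_smul_comm, ← mul_assoc, ih, smul_mul_assoc, smul_smul,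
        zpow_add_one₀ hs, mul_assoc, mul_comm s]
  | pred n ih =>
      have : ((u ^ (-(n : ℤ) - 1) : Aˣ) : A) = ((u ^ (-(n : ℤ)) : Aˣ) : A) * ((u⁻¹ : Aˣ) : A) := by
        rw [zpow_sub_one, Units.val_mul]
      rw [this, mul_assoc, inv_comm_left hs h, mul_smul_comm, ← mul_assoc, ih, smul_mul_assoc,
        smul_smul, zpow_sub_one₀ hs, mul_assoc, mul_comm s⁻¹]

end Comm

namespace Stmt17b

variable {q : ℂ} {m : ℕ}

theorem qq_ne (hq0 : q ≠ 0) (hq : ∀ k : ℕ, 0 < k → q ^ k ≠ 1) : q - q⁻¹ ≠ 0 := by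
  intro h
  have h2 : q ^ 2 = 1 := by
    have := sub_eq_zero.mp h
    field_simp at this
    simpa [sq] using this
  exact hq 2 (by norm_num) h2

theorem qm_ne (hq : ∀ k : ℕ, 0 < k → q ^ k ≠ 1) (hm : 1 ≤ m) : q ^ (2 * m) - 1 ≠ 0 := by
  intro h
  exact hq (2 * m) (by omega) (sub_eq_zero.mp h)

end Stmt17b
namespace Stmt17

variable (q : ℂ) (m : ℕ)

theorem uKinv_val : ((uK q m)⁻¹ : (Uq q m)ˣ) = (Kinvgen q m : Uq q m) := rfl

theorem KinvE (hq0 : q ≠ 0) :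
    Kinvgen q m * Egen q m = (q ^ 2)⁻¹ • (Egen q m * Kinvgen q m) := by
  have h := inv_comm_left (u := uK q m) (g := Egen q m) (s := q ^ 2)
    (pow_ne_zero 2 hq0) (rel_KE q m)
  simpa [uKinv_val] using h

theorem KinvF (hq0 : q ≠ 0) :
    Kinvgen q m * Fgen q m = q ^ 2 • (Fgen q m * Kinvgen q m) := by
  have h := inv_comm_left (u := uK q m) (g := Fgen q m) (s := (q ^ 2)⁻¹)
    (inv_ne_zero (pow_ne_zero 2 hq0)) (rel_KF q m)
  simpa [uKinv_val, inv_inv] using h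

theorem EF_eq : Egen q m * Fgen q m =
    Fgen q m * Egen q m + (q - q⁻¹)⁻¹ • (Kgen q m ^ m - Kinvgen q m ^ m) :=
  sub_eq_iff_eq_add'.mp (rel_EF q m)

theorem comm_E (hq0 : q ≠ 0) (hq : ∀ k : ℕ, 0 < k → q ^ k ≠ 1) (hm : 1 ≤ m) :
    Casimir q m * Egen q m = Egen q m * Casimir q m := by
  have h1 : q - q⁻¹ ≠ 0 := Stmt17b.qq_ne hq0 hq
  have h2 : q ^ (2 * m) - 1 ≠ 0 := Stmt17b.qm_ne hq hm
  have hKmE := pow_comm_left (rel_KE q m) m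
  have hKimE := pow_comm_left (KinvE q m hq0) m
  have hsub : (Kgen q m ^ m - Kinvgen q m ^ m) * Egen q m
      = (q ^ 2) ^ m • (Egen q m * Kgen q m ^ m)
        - (q ^ 2)⁻¹ ^ m • (Egen q m * Kinvgen q m ^ m) := by
    rw [sub_mul, hKmE, hKimE]
  rw [Casimir, add_mul, add_mul, mul_add, mul_add, smul_mul_assoc, smul_mul_assoc,
    hKmE, hKimE, mul_smul_comm, mul_smul_comm, ← mul_assoc, EF_eq, add_mul, smul_mul_assoc,
    hsub]
  simp only [mul_assoc, smul_smul, smul_sub]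
  have ht : q ^ (2 * m) ≠ 0 := pow_ne_zero _ hq0
  match_scalars
  · ring
  all_goals
    simp only [inv_pow, ← pow_mul]
    set d := q - q⁻¹
    set t := q ^ (2 * m)
    field_simp
    ring

end Stmt17
namespace Stmt17

variable (q : ℂ) (m : ℕ)

theorem comm_F (hq0 : q ≠ 0) (hq : ∀ k : ℕ, 0 < k → q ^ k ≠ 1) (hm : 1 ≤ m) :
    Casimir q m * Fgen q m = Fgen q m * Casimir q m := by
  have h1 : q - q⁻¹ ≠ 0 := Stmt17b.qq_ne hq0 hq
  have h2 : q ^ (2 * m) - 1 ≠ 0 := Stmt17b.qm_ne hq hm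
  have ht : q ^ (2 * m) ≠ 0 := pow_ne_zero _ hq0
  have hKmF := pow_comm_left (rel_KF q m) m
  have hKimF := pow_comm_left (KinvF q m hq0) m
  have hFEF : (Fgen q m * Egen q m) * Fgen q m
      = Fgen q m * (Fgen q m * Egen q m)
        + (q - q⁻¹)⁻¹ • (Fgen q m * Kgen q m ^ m)
        - (q - q⁻¹)⁻¹ • (Fgen q m * Kinvgen q m ^ m) := by
    rw [mul_assoc, EF_eq, mul_add, mul_smul_comm, mul_sub, smul_sub, add_sub_assoc]
  rw [Casimir, add_mul, add_mul, mul_add, mul_add, smul_mul_assoc, smul_mul_assoc,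
    hKmF, hKimF, hFEF, mul_smul_comm, mul_smul_comm]
  match_scalars
  · ring
  all_goals
    simp only [inv_pow, ← pow_mul]
    set d := q - q⁻¹
    set t := q ^ (2 * m)
    field_simp
    ring

theorem commKKinv : Commute (Kgen q m) (Kinvgen q m) := by
  unfold Commute SemiconjBy
  rw [rel_KKinv, rel_KinvK]

theorem comm_K (hq0 : q ≠ 0) : Casimir q m * Kgen q m = Kgen q m * Casimir q m := by
  have hKFE : Kgen q m * (Fgen q m * Egen q m) = Fgen q m * (Egen q m * Kgen q m) := by
    rw [← mul_assoc, rel_KF, smul_mul_assoc, mul_assoc, rel_KE, mul_smul_comm, smul_smul,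
      inv_mul_cancel₀ (pow_ne_zero 2 hq0), one_smul]
  have hKKim := ((commKKinv q m).pow_right m).eq
  rw [Casimir, add_mul, add_mul, mul_add, mul_add, smul_mul_assoc, smul_mul_assoc,
    mul_smul_comm, mul_smul_comm, hKFE, hKKim, ← pow_succ, ← pow_succ']
  rw [mul_assoc]

theorem comm_Kinv (hq0 : q ≠ 0) :
    Casimir q m * Kinvgen q m = Kinvgen q m * Casimir q m := by
  have hKiFE : Kinvgen q m * (Fgen q m * Egen q m)
      = Fgen q m * (Egen q m * Kinvgen q m) := by
    rw [← mul_assoc, KinvF q m hq0, smul_mul_assoc, mul_assoc, KinvE q m hq0, mul_smul_comm,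
      smul_smul, mul_inv_cancel₀ (pow_ne_zero 2 hq0), one_smul]
  have hKiKm := ((commKKinv q m).symm.pow_right m).eq
  rw [Casimir, add_mul, add_mul, mul_add, mul_add, smul_mul_assoc, smul_mul_assoc,
    mul_smul_comm, mul_smul_comm, hKiFE, hKiKm, ← pow_succ, ← pow_succ']
  rw [mul_assoc]

theorem central (hq0 : q ≠ 0) (hq : ∀ k : ℕ, 0 < k → q ^ k ≠ 1) (hm : 1 ≤ m)
    (u : Uq q m) : Casimir q m * u = u * Casimir q m := by
  obtain ⟨x, rfl⟩ := RingQuot.mkAlgHom_surjective ℂ (UqRel q m) u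
  induction x using FreeAlgebra.induction with
  | grade0 r => rw [AlgHom.commutes]; exact (Algebra.commutes r (Casimir q m)).symm
  | grade1 g =>
      cases g with
      | E => exact comm_E q m hq0 hq hm
      | F => exact comm_F q m hq0 hq hm
      | K => exact comm_K q m hq0
      | Kinv => exact comm_Kinv q m hq0
  | mul a b ha hb => rw [map_mul, ← mul_assoc, ha, mul_assoc, hb, mul_assoc]
  | add a b ha hb => rw [map_add, mul_add, add_mul, ha, hb]

end Stmt17
set_option linter.unusedSectionVars false

instance : Countable UqGen :=
  ⟨⟨fun g => match g with | .E => 0 | .F => 1 | .K => 2 | .Kinv => 3,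
    by intro a b h; cases a <;> cases b <;> simp_all⟩⟩

namespace Stmt17

section ModulePart

variable (q : ℂ) (m : ℕ)

/-- integer powers of K -/
def uKz (n : ℤ) : Uq q m := ((uK q m ^ n : (Uq q m)ˣ) : Uq q m)

theorem uKz_mul (a b : ℤ) : uKz q m a * uKz q m b = uKz q m (a + b) := by
  rw [uKz, uKz, uKz, ← Units.val_mul, ← zpow_add]

theorem uKz_zero : uKz q m 0 = 1 := by simp [uKz]

theorem uKz_K : (Kgen q m) = uKz q m 1 := by simp [uKz, uK]

theorem uKz_Kinv : (Kinvgen q m) = uKz q m (-1) := by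
  rw [uKz, zpow_neg, zpow_one]; rfl

theorem uKz_Km : (Kgen q m) ^ m = uKz q m m := by
  rw [uKz, zpow_natCast, Units.val_pow_eq_pow_val]; rfl

theorem uKz_Kim : (Kinvgen q m) ^ m = uKz q m (-(m : ℤ)) := by
  rw [uKz, zpow_neg, zpow_natCast, ← inv_pow, Units.val_pow_eq_pow_val]; rfl

theorem E_uKz (hq0 : q ≠ 0) (n : ℤ) :
    Egen q m * uKz q m n = ((q ^ 2) ^ (-n) : ℂ) • (uKz q m n * Egen q m) := by
  have h := zpow_comm_left (u := uK q m) (g := Egen q m) (pow_ne_zero 2 hq0) (rel_KE q m) n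
  rw [uKz, h, smul_smul, zpow_neg, inv_mul_cancel₀ (zpow_ne_zero _ (pow_ne_zero 2 hq0)),
    one_smul]

theorem F_uKz (hq0 : q ≠ 0) (n : ℤ) :
    Fgen q m * uKz q m n = ((q ^ 2) ^ n : ℂ) • (uKz q m n * Fgen q m) := by
  have h := zpow_comm_left (u := uK q m) (g := Fgen q m)
    (inv_ne_zero (pow_ne_zero 2 hq0)) (rel_KF q m) n
  rw [uKz, h, smul_smul, inv_zpow, mul_inv_cancel₀ (zpow_ne_zero _ (pow_ne_zero 2 hq0)),
    one_smul]

theorem pow2_ne_one (hq : ∀ k : ℕ, 0 < k → q ^ k ≠ 1) {k : ℕ} (hk : 0 < k) :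
    (q ^ 2 : ℂ) ^ k ≠ 1 := by
  rw [← pow_mul]; exact hq (2 * k) (by omega)

theorem zpow_q_ne_one (hq : ∀ k : ℕ, 0 < k → q ^ k ≠ 1) {n : ℤ} (hn : n ≠ 0) :
    (q ^ 2 : ℂ) ^ n ≠ 1 := by
  intro he
  rcases hn.lt_or_gt with h | h
  · refine pow2_ne_one q (hq := hq) (k := (-n).toNat) (by omega) ?_
    calc ((q ^ 2 : ℂ)) ^ (-n).toNat = (q ^ 2 : ℂ) ^ (((-n).toNat : ℤ)) := (zpow_natCast _ _).symm
    _ = (q ^ 2 : ℂ) ^ (-n) := by rw [Int.toNat_of_nonneg (by omega)]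
    _ = 1 := by rw [zpow_neg, he, inv_one]
  · refine pow2_ne_one q (hq := hq) (k := n.toNat) (by omega) ?_
    calc ((q ^ 2 : ℂ)) ^ n.toNat = (q ^ 2 : ℂ) ^ ((n.toNat : ℤ)) := (zpow_natCast _ _).symm
    _ = 1 := by rw [Int.toNat_of_nonneg (by omega), he]

/-- the eigenvalue of E on `kv n` -/
def mu (e : ℂ) (n : ℤ) : ℂ := (q ^ 2) ^ (-n) * e

theorem mu_inj (hq0 : q ≠ 0) (hq : ∀ k : ℕ, 0 < k → q ^ k ≠ 1) {e : ℂ} (he : e ≠ 0) :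
    Function.Injective (mu q e) := by
  intro a b hab
  rw [mu, mu, mul_left_inj' he] at hab
  by_contra hne
  have hone : (q ^ 2 : ℂ) ^ (-a - -b) = 1 := by
    rw [zpow_sub₀ (pow_ne_zero 2 hq0), hab, div_self (zpow_ne_zero _ (pow_ne_zero 2 hq0))]
  exact zpow_q_ne_one q hq (by omega) hone

theorem mu_ne_e (hq0 : q ≠ 0) (hq : ∀ k : ℕ, 0 < k → q ^ k ≠ 1) {e : ℂ} (he : e ≠ 0)
    {n : ℤ} (hn : n ≠ 0) : mu q e n ≠ e := by
  intro hcon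
  exact hn (mu_inj q hq0 hq he (show mu q e n = mu q e 0 by rw [hcon]; simp [mu]))

variable (V : Type) [AddCommGroup V] [Module (Uq q m) V] [Module ℂ V]
  [IsScalarTower ℂ (Uq q m) V] [SMulCommClass (Uq q m) ℂ V]

theorem nzsd : NoZeroSMulDivisors ℂ V :=
  ⟨fun {c v} h => by
    rcases eq_or_ne c 0 with hc | hc
    · exact Or.inl hc
    · refine Or.inr ?_
      have := congrArg (fun x => c⁻¹ • x) h
      simpa [smul_smul, inv_mul_cancel₀ hc] using this⟩

theorem asmul (c : ℂ) (v : V) : algebraMap ℂ (Uq q m) c • v = c • v :=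
  algebraMap_smul (Uq q m) c v

variable (w : V)

/-- the candidate basis vectors `K^n w` -/
def kv (n : ℤ) : V := uKz q m n • w

theorem kv_zero : kv q m V w 0 = w := by rw [kv, uKz_zero, one_smul]

theorem kv_ne_zero (hw0 : w ≠ 0) (n : ℤ) : kv q m V w n ≠ 0 := by
  intro h
  apply hw0
  have h2 : uKz q m (-n) • (uKz q m n • w) = 0 := by
    rw [kv] at h; rw [h, smul_zero]
  rwa [← mul_smul, uKz_mul, neg_add_cancel, uKz_zero, one_smul] at h2

theorem uKz_smul_kv (a n : ℤ) : uKz q m a • kv q m V w n = kv q m V w (a + n) := by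
  rw [kv, kv, ← mul_smul, uKz_mul]

theorem E_kv (hq0 : q ≠ 0) {e : ℂ}
    (hw : Egen q m • w = algebraMap ℂ (Uq q m) e • w) (n : ℤ) :
    Egen q m • kv q m V w n = mu q e n • kv q m V w n := by
  rw [kv, ← mul_smul, E_uKz q m hq0, smul_assoc, mul_smul, hw, asmul q m V e w,
    smul_comm (uKz q m n) e w, smul_smul]
  rfl

end ModulePart

end Stmt17
namespace Stmt17

section ModulePart2

variable (q : ℂ) (m : ℕ) (V : Type) [AddCommGroup V] [Module (Uq q m) V] [Module ℂ V]
  [IsScalarTower ℂ (Uq q m) V] [SMulCommClass (Uq q m) ℂ V] (w : V)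

/-- the ℂ-span of the `K^n w` -/
def SpanK : Submodule ℂ V := Submodule.span ℂ (Set.range (kv q m V w))

theorem kv_mem (n : ℤ) : kv q m V w n ∈ SpanK q m V w :=
  Submodule.subset_span ⟨n, rfl⟩

theorem w_mem : w ∈ SpanK q m V w := by
  have := kv_mem q m V w 0
  rwa [kv_zero] at this

theorem smul_mem_span (u : Uq q m) (hu : ∀ n : ℤ, u • kv q m V w n ∈ SpanK q m V w)
    {v : V} (hv : v ∈ SpanK q m V w) : u • v ∈ SpanK q m V w := by
  induction hv using Submodule.span_induction with
  | mem x hx => obtain ⟨n, rfl⟩ := hx; exact hu n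
  | zero => rw [smul_zero]; exact (SpanK q m V w).zero_mem
  | add x y hx hy ihx ihy => rw [smul_add]; exact (SpanK q m V w).add_mem ihx ihy
  | smul c x hx ih => rw [smul_comm]; exact (SpanK q m V w).smul_mem c ih

theorem uKz_smul_mem (a : ℤ) {v : V} (hv : v ∈ SpanK q m V w) :
    uKz q m a • v ∈ SpanK q m V w := by
  refine smul_mem_span q m V w _ (fun n => ?_) hv
  rw [uKz_smul_kv]; exact kv_mem q m V w _

theorem Fw_mem {e χ : ℂ} (he : e ≠ 0)
    (hw : Egen q m • w = algebraMap ℂ (Uq q m) e • w)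
    (hΩ : ∀ v : V, Casimir q m • v = algebraMap ℂ (Uq q m) χ • v) :
    Fgen q m • w ∈ SpanK q m V w := by
  have h0 := hΩ w
  rw [Casimir, add_smul, add_smul, mul_smul, hw, asmul, smul_comm, smul_assoc, smul_assoc,
    asmul] at h0
  set a := (((q ^ (2 * m) - 1) * (q - q⁻¹))⁻¹ * q ^ (2 * m)) with ha
  set b := ((q ^ (2 * m) - 1) * (q - q⁻¹))⁻¹ with hb
  have h1 : e • (Fgen q m • w) = χ • w - a • kv q m V w m - b • kv q m V w (-(m : ℤ)) := by
    rw [kv, kv, ← uKz_Km, ← uKz_Kim, ← h0]; abel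
  have h2 : e • (Fgen q m • w) ∈ SpanK q m V w := by
    rw [h1]
    exact Submodule.sub_mem _
      (Submodule.sub_mem _ ((SpanK q m V w).smul_mem χ (w_mem q m V w))
        ((SpanK q m V w).smul_mem a (kv_mem q m V w _)))
      ((SpanK q m V w).smul_mem b (kv_mem q m V w _))
  have h3 := (SpanK q m V w).smul_mem e⁻¹ h2
  rwa [smul_smul, inv_mul_cancel₀ he, one_smul] at h3

theorem gen_kv_mem (hq0 : q ≠ 0) {e χ : ℂ} (he : e ≠ 0)
    (hw : Egen q m • w = algebraMap ℂ (Uq q m) e • w)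
    (hΩ : ∀ v : V, Casimir q m • v = algebraMap ℂ (Uq q m) χ • v)
    (g : UqGen) (n : ℤ) :
    RingQuot.mkAlgHom ℂ (UqRel q m) (FreeAlgebra.ι ℂ g) • kv q m V w n ∈ SpanK q m V w := by
  cases g with
  | E =>
      rw [show RingQuot.mkAlgHom ℂ (UqRel q m) (FreeAlgebra.ι ℂ UqGen.E) = Egen q m from rfl,
        E_kv q m V w hq0 hw]
      exact (SpanK q m V w).smul_mem _ (kv_mem q m V w n)
  | K =>
      rw [show RingQuot.mkAlgHom ℂ (UqRel q m) (FreeAlgebra.ι ℂ UqGen.K) = Kgen q m from rfl,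
        uKz_K, uKz_smul_kv]
      exact kv_mem q m V w _
  | Kinv =>
      rw [show RingQuot.mkAlgHom ℂ (UqRel q m) (FreeAlgebra.ι ℂ UqGen.Kinv) = Kinvgen q m
        from rfl, uKz_Kinv, uKz_smul_kv]
      exact kv_mem q m V w _
  | F =>
      rw [show RingQuot.mkAlgHom ℂ (UqRel q m) (FreeAlgebra.ι ℂ UqGen.F) = Fgen q m from rfl,
        kv, ← mul_smul, F_uKz q m hq0, smul_assoc, mul_smul]
      exact (SpanK q m V w).smul_mem _
        (uKz_smul_mem q m V w n (Fw_mem q m V w he hw hΩ))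

theorem span_all (hq0 : q ≠ 0) {e χ : ℂ} (he : e ≠ 0)
    (hw : Egen q m • w = algebraMap ℂ (Uq q m) e • w)
    (hcyc : ∀ v : V, ∃ u : Uq q m, v = u • w)
    (hΩ : ∀ v : V, Casimir q m • v = algebraMap ℂ (Uq q m) χ • v)
    (v : V) : v ∈ SpanK q m V w := by
  have hstable : ∀ u : Uq q m, ∀ v' ∈ SpanK q m V w, u • v' ∈ SpanK q m V w := by
    intro u
    obtain ⟨x, rfl⟩ := RingQuot.mkAlgHom_surjective ℂ (UqRel q m) u
    induction x using FreeAlgebra.induction with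
    | grade0 r =>
        intro v' hv'
        rw [AlgHom.commutes, asmul]
        exact (SpanK q m V w).smul_mem r hv'
    | grade1 g =>
        intro v' hv'
        exact smul_mem_span q m V w _ (gen_kv_mem q m V w hq0 he hw hΩ g) hv'
    | mul x y hx hy =>
        intro v' hv'
        rw [map_mul, mul_smul]
        exact hx _ (hy _ hv')
    | add x y hx hy =>
        intro v' hv'
        rw [map_add, add_smul]
        exact (SpanK q m V w).add_mem (hx _ hv') (hy _ hv')
  obtain ⟨u, rfl⟩ := hcyc v
  exact hstable u w (w_mem q m V w)

end ModulePart2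

end Stmt17
namespace Stmt17

section ModulePart3

variable (q : ℂ) (m : ℕ) (V : Type) [AddCommGroup V] [Module (Uq q m) V] [Module ℂ V]
  [IsScalarTower ℂ (Uq q m) V] [SMulCommClass (Uq q m) ℂ V] (w : V)

theorem w_mem_W (hq0 : q ≠ 0) (hq : ∀ k : ℕ, 0 < k → q ^ k ≠ 1) {e χ : ℂ} (he : e ≠ 0)
    (hw : Egen q m • w = algebraMap ℂ (Uq q m) e • w)
    (hcyc : ∀ v : V, ∃ u : Uq q m, v = u • w)
    (hΩ : ∀ v : V, Casimir q m • v = algebraMap ℂ (Uq q m) χ • v)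
    (W : Submodule (Uq q m) V) {v : V} (hvW : v ∈ W) (hv0 : v ≠ 0) : w ∈ W := by
  classical
  obtain ⟨c, hc⟩ := Finsupp.mem_span_range_iff_exists_finsupp.mp
    (span_all q m V w hq0 he hw hcyc hΩ v)
  suffices H : ∀ N : ℕ, ∀ c : ℤ →₀ ℂ, c.support.card = N → c ≠ 0 →
      (c.sum fun n a => a • kv q m V w n) ∈ W → w ∈ W by
    refine H c.support.card c rfl ?_ (by rw [hc]; exact hvW)
    intro h0
    apply hv0
    rw [← hc, h0, Finsupp.sum_zero_index]
  intro N
  induction N using Nat.strong_induction_on with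
  | _ N IH =>
    intro c hcard hc0 hcW
    obtain ⟨n₀, hn₀⟩ := Finsupp.support_nonempty_iff.mpr hc0
    have hcn₀ : c n₀ ≠ 0 := Finsupp.mem_support_iff.mp hn₀
    by_cases hone : c.support = {n₀}
    · have hsum : (c.sum fun n a => a • kv q m V w n) = c n₀ • kv q m V w n₀ := by
        rw [show (c.sum fun n a => a • kv q m V w n)
            = ∑ n ∈ c.support, c n • kv q m V w n from rfl, hone, Finset.sum_singleton]
      rw [hsum] at hcW
      have hkv : kv q m V w n₀ ∈ W := by
        have h2 := W.smul_mem (algebraMap ℂ (Uq q m) (c n₀)⁻¹) hcW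
        rwa [asmul, smul_smul, inv_mul_cancel₀ hcn₀, one_smul] at h2
      have h3 := W.smul_mem (uKz q m (-n₀)) hkv
      rwa [uKz_smul_kv, neg_add_cancel, kv_zero] at h3
    · obtain ⟨n₁, hn₁, hne⟩ : ∃ n₁ ∈ c.support, n₁ ≠ n₀ := by
        by_contra hcon
        push_neg at hcon
        exact hone (Finset.eq_singleton_iff_unique_mem.mpr ⟨hn₀, fun x hx => hcon x hx⟩)
      set c' : ℤ →₀ ℂ := Finsupp.onFinset (c.support.erase n₁)
        (fun n => (mu q e n - mu q e n₁) * c n)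
        (fun n hn => by
          rcases mul_ne_zero_iff.mp hn with ⟨h1, h2⟩
          refine Finset.mem_erase.mpr ⟨?_, Finsupp.mem_support_iff.mpr h2⟩
          intro hnn
          exact h1 (by rw [hnn, sub_self])) with hc'
      have hc'app : ∀ n, c' n = (mu q e n - mu q e n₁) * c n := fun n => rfl
      -- the transformed vector lies in W
      have key : (c'.sum fun n a => a • kv q m V w n)
          = Egen q m • (c.sum fun n a => a • kv q m V w n)
            - algebraMap ℂ (Uq q m) (mu q e n₁) • (c.sum fun n a => a • kv q m V w n) := by
        rw [Finsupp.sum_of_support_subset c'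
          (Finset.Subset.trans (Finsupp.support_onFinset_subset) (Finset.erase_subset _ _))
          (fun n a => a • kv q m V w n) (fun i _ => zero_smul ℂ _)]
        rw [asmul,
          show (c.sum fun n a => a • kv q m V w n)
            = ∑ n ∈ c.support, c n • kv q m V w n from rfl,
          Finset.smul_sum, Finset.smul_sum, ← Finset.sum_sub_distrib]
        refine Finset.sum_congr rfl (fun n _ => ?_)
        rw [hc'app, smul_comm (Egen q m) (c n), E_kv q m V w hq0 hw, smul_smul, smul_smul,
          ← sub_smul]
        congr 1
        ring
      have hc'W : (c'.sum fun n a => a • kv q m V w n) ∈ W := by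
        rw [key]
        exact W.sub_mem (W.smul_mem _ hcW) (W.smul_mem _ hcW)
      have hc'0 : c' ≠ 0 := by
        intro h0
        have : c' n₀ = 0 := by rw [h0]; rfl
        rw [hc'app] at this
        rcases mul_eq_zero.mp this with h | h
        · exact (sub_ne_zero.mpr (fun hmu => hne (mu_inj q hq0 hq he hmu).symm)) h
        · exact hcn₀ h
      have hlt : c'.support.card < N := by
        have h1 : c'.support ⊆ c.support.erase n₁ := Finsupp.support_onFinset_subset
        have h2 := Finset.card_le_card h1
        have h3 : (c.support.erase n₁).card < c.support.card :=
          Finset.card_erase_lt_of_mem hn₁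
        omega
      exact IH c'.support.card hlt c' rfl hc'0 hc'W

theorem simple_of_char (hq0 : q ≠ 0) (hq : ∀ k : ℕ, 0 < k → q ^ k ≠ 1)
    {e χ : ℂ} (he : e ≠ 0) (hw0 : w ≠ 0)
    (hw : Egen q m • w = algebraMap ℂ (Uq q m) e • w)
    (hcyc : ∀ v : V, ∃ u : Uq q m, v = u • w)
    (hΩ : ∀ v : V, Casimir q m • v = algebraMap ℂ (Uq q m) χ • v) :
    IsSimpleModule (Uq q m) V := by
  have hbt : (⊥ : Submodule (Uq q m) V) ≠ ⊤ := by
    intro h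
    apply hw0
    have : w ∈ (⊥ : Submodule (Uq q m) V) := by rw [h]; trivial
    simpa using this
  haveI : Nontrivial (Submodule (Uq q m) V) := ⟨⊥, ⊤, hbt⟩
  rw [isSimpleModule_iff]
  refine { eq_bot_or_eq_top := fun W => ?_ }
  by_cases hW : W = ⊥
  · exact Or.inl hW
  · right
    obtain ⟨v, hvW, hv0⟩ := Submodule.exists_mem_ne_zero_of_ne_bot hW
    have hwW : w ∈ W := w_mem_W q m V w hq0 hq he hw hcyc hΩ W hvW hv0
    rw [eq_top_iff]
    intro v' _
    obtain ⟨u, rfl⟩ := hcyc v'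
    exact W.smul_mem u hwW

end ModulePart3

end Stmt17
namespace Stmt17

section ModulePart4

variable (q : ℂ) (m : ℕ) (V : Type) [AddCommGroup V] [Module (Uq q m) V] [Module ℂ V]
  [IsScalarTower ℂ (Uq q m) V] [SMulCommClass (Uq q m) ℂ V] (w : V)

/-- the action of E as a ℂ-linear endomorphism -/
def actE : Module.End ℂ V where
  toFun v := Egen q m • v
  map_add' x y := smul_add _ x y
  map_smul' c v := smul_comm (Egen q m) c v

theorem kv_indep (hq0 : q ≠ 0) (hq : ∀ k : ℕ, 0 < k → q ^ k ≠ 1) {e : ℂ} (he : e ≠ 0)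
    (hw0 : w ≠ 0) (hw : Egen q m • w = algebraMap ℂ (Uq q m) e • w) :
    LinearIndependent ℂ (kv q m V w) := by
  haveI := nzsd V
  exact Module.End.eigenvectors_linearIndependent' (actE q m V) (mu q e)
    (mu_inj q hq0 hq he) _
    (fun n => ⟨Module.End.mem_eigenspace_iff.mpr (E_kv q m V w hq0 hw n),
      kv_ne_zero q m V w hw0 n⟩)

theorem whittaker_unique (hq0 : q ≠ 0) (hq : ∀ k : ℕ, 0 < k → q ^ k ≠ 1)
    {e χ : ℂ} (he : e ≠ 0) (hw0 : w ≠ 0)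
    (hw : Egen q m • w = algebraMap ℂ (Uq q m) e • w)
    (hcyc : ∀ v : V, ∃ u : Uq q m, v = u • w)
    (hΩ : ∀ v : V, Casimir q m • v = algebraMap ℂ (Uq q m) χ • v)
    (v : V) (hv : Egen q m • v = algebraMap ℂ (Uq q m) e • v) :
    ∃ c : ℂ, v = algebraMap ℂ (Uq q m) c • w := by
  classical
  obtain ⟨c, hc⟩ := Finsupp.mem_span_range_iff_exists_finsupp.mp
    (span_all q m V w hq0 he hw hcyc hΩ v)
  set l : ℤ →₀ ℂ := Finsupp.onFinset c.support (fun n => (mu q e n - e) * c n)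
    (fun n hn => Finsupp.mem_support_iff.mpr
      (fun h0 => hn (show (mu q e n - e) * c n = 0 by rw [h0, mul_zero]))) with hldef
  have hlapp : ∀ n, l n = (mu q e n - e) * c n := fun n => rfl
  have hl0 : Finsupp.linearCombination ℂ (kv q m V w) l = 0 := by
    rw [Finsupp.linearCombination_apply]
    have hkey : (l.sum fun n a => a • kv q m V w n)
        = Egen q m • v - algebraMap ℂ (Uq q m) e • v := by
      rw [← hc]
      rw [Finsupp.sum_of_support_subset l Finsupp.support_onFinset_subset
        (fun n a => a • kv q m V w n) (fun i _ => zero_smul ℂ _)]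
      rw [asmul,
        show (c.sum fun n a => a • kv q m V w n)
          = ∑ n ∈ c.support, c n • kv q m V w n from rfl,
        Finset.smul_sum, Finset.smul_sum, ← Finset.sum_sub_distrib]
      refine Finset.sum_congr rfl (fun n _ => ?_)
      rw [hlapp, smul_comm (Egen q m) (c n), E_kv q m V w hq0 hw, smul_smul, smul_smul,
        ← sub_smul]
      congr 1
      ring
    rw [hkey, hv, sub_self]
  have hlz := linearIndependent_iff.mp (kv_indep q m V w hq0 hq he hw0 hw) l hl0
  have hsupp : c.support ⊆ {0} := by
    intro n hn
    simp only [Finset.mem_singleton]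
    by_contra hnz
    have h0 : l n = 0 := by rw [hlz]; rfl
    rw [hlapp] at h0
    rcases mul_eq_zero.mp h0 with h | h
    · exact (sub_ne_zero.mpr (mu_ne_e q hq0 hq he hnz)) h
    · exact Finsupp.mem_support_iff.mp hn h
  refine ⟨c 0, ?_⟩
  rw [asmul, ← hc,
    Finsupp.sum_of_support_subset c hsupp (fun n a => a • kv q m V w n)
      (fun i _ => zero_smul ℂ _),
    Finset.sum_singleton, kv_zero]

end ModulePart4

end Stmt17
namespace Stmt17

section ModulePart5

open Polynomial

variable (q : ℂ) (m : ℕ) (V : Type) [AddCommGroup V] [Module (Uq q m) V] [Module ℂ V]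
  [IsScalarTower ℂ (Uq q m) V] [SMulCommClass (Uq q m) ℂ V] (w : V)

/-- the action of the Casimir as a ℂ-linear endomorphism -/
def actC : Module.End ℂ V where
  toFun v := Casimir q m • v
  map_add' x y := smul_add _ x y
  map_smul' c v := smul_comm (Casimir q m) c v

/-- the action of `Casimir - α` as a `Uq`-linear endomorphism -/
def Lres (hq0 : q ≠ 0) (hq : ∀ k : ℕ, 0 < k → q ^ k ≠ 1) (hm : 1 ≤ m) (α : ℂ) :
    V →ₗ[Uq q m] V where
  toFun v := (Casimir q m - algebraMap ℂ (Uq q m) α) • v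
  map_add' x y := smul_add _ x y
  map_smul' u v := by
    have hcomm : (Casimir q m - algebraMap ℂ (Uq q m) α) * u
        = u * (Casimir q m - algebraMap ℂ (Uq q m) α) := by
      rw [sub_mul, mul_sub, central q m hq0 hq hm u, Algebra.commutes]
    show (Casimir q m - algebraMap ℂ (Uq q m) α) • u • v
        = u • ((Casimir q m - algebraMap ℂ (Uq q m) α) • v)
    rw [← mul_smul, ← mul_smul, hcomm]

theorem char_of_simple (hq0 : q ≠ 0) (hq : ∀ k : ℕ, 0 < k → q ^ k ≠ 1) (hm : 1 ≤ m)
    {e : ℂ} (he : e ≠ 0) (hw0 : w ≠ 0)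
    (hw : Egen q m • w = algebraMap ℂ (Uq q m) e • w)
    (hcyc : ∀ v : V, ∃ u : Uq q m, v = u • w)
    (hs : IsSimpleModule (Uq q m) V) :
    ∃ χ : ℂ, ∀ v : V, Casimir q m • v = algebraMap ℂ (Uq q m) χ • v := by
  classical
  haveI := nzsd V
  by_contra hcon
  push_neg at hcon
  set L : ℂ → (V →ₗ[Uq q m] V) := fun α => Lres q m V hq0 hq hm α with hLdef
  have hLapp : ∀ (α : ℂ) (v : V),
      L α v = Casimir q m • v - algebraMap ℂ (Uq q m) α • v := by
    intro α v
    show (Casimir q m - algebraMap ℂ (Uq q m) α) • v = _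
    rw [sub_smul]
  have hLne : ∀ α : ℂ, L α ≠ 0 := by
    intro α h0
    obtain ⟨v, hv⟩ := hcon α
    apply hv
    have := congrArg (fun f : V →ₗ[Uq q m] V => f v) h0
    simp only [LinearMap.zero_apply] at this
    rw [hLapp] at this
    rw [sub_eq_zero] at this
    exact this
  have hbij : ∀ α : ℂ, Function.Bijective (L α) := by
    intro α
    constructor
    · rw [← LinearMap.ker_eq_bot]
      rcases eq_bot_or_eq_top (LinearMap.ker (L α)) with h | h
      · exact h
      · exact absurd (LinearMap.ker_eq_top.mp h) (hLne α)
    · rw [← LinearMap.range_eq_top]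
      rcases eq_bot_or_eq_top (LinearMap.range (L α)) with h | h
      · exact absurd (LinearMap.range_eq_bot.mp h) (hLne α)
      · exact h
  set T : Module.End ℂ V := actC q m V with hTdef
  have hTX : ∀ (α : ℂ) (v : V), (Polynomial.aeval T (X - C α)) v = L α v := by
    intro α v
    rw [map_sub, Polynomial.aeval_X, Polynomial.aeval_C, LinearMap.sub_apply,
      Module.algebraMap_end_apply, hLapp, asmul]
    rfl
  -- injectivity of nonzero polynomials in T
  have hinjprod : ∀ s : Multiset ℂ,
      Function.Injective (Polynomial.aeval T (s.map fun a => X - C a).prod : V → V) := by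
    intro s
    induction s using Multiset.induction_on with
    | empty =>
        simp only [Multiset.map_zero, Multiset.prod_zero, map_one]
        intro a b h
        simpa using h
    | cons a s ih =>
        rw [Multiset.map_cons, Multiset.prod_cons, map_mul]
        have : ∀ v : V, (Polynomial.aeval T (X - C a)
            * Polynomial.aeval T (s.map fun a => X - C a).prod) v
            = L a ((Polynomial.aeval T (s.map fun a => X - C a).prod) v) := by
          intro v
          rw [Module.End.mul_apply, hTX]
        intro x y hxy
        rw [this, this] at hxy
        exact ih ((hbij a).injective hxy)
  have hinj : ∀ p : ℂ[X], p ≠ 0 → Function.Injective (Polynomial.aeval T p : V → V) := by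
    intro p hp
    have hfac := (C_leadingCoeff_mul_prod_multiset_X_sub_C (IsAlgClosed.card_roots_eq_natDegree (p := p))).symm
    rw [hfac, map_mul, Polynomial.aeval_C]
    intro x y hxy
    simp only [Module.End.mul_apply, Module.algebraMap_end_apply] at hxy
    have hl : p.leadingCoeff ≠ 0 := leadingCoeff_ne_zero.mpr hp
    exact hinjprod p.roots (smul_right_injective V hl hxy)
  -- the resolvent family
  set xf : ℂ → V := fun α => Function.surjInv (hbij α).2 w with hxf
  have hLx : ∀ α, L α (xf α) = w := fun α => Function.surjInv_eq (hbij α).2 w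
  have hLI : LinearIndependent ℂ xf := by
    rw [linearIndependent_iff']
    intro s d hsum i hi
    by_contra hdne
    set P : ℂ → ℂ[X] := fun j => ∏ k ∈ s.erase j, (X - C k) with hP
    have hap : ∀ j ∈ s, (Polynomial.aeval T (∏ k ∈ s, (X - C k))) (xf j)
        = (Polynomial.aeval T (P j)) w := by
      intro j hj
      rw [← Finset.prod_erase_mul _ _ hj, map_mul, Module.End.mul_apply, hTX, hLx]
    have h0 : (Polynomial.aeval T (∑ j ∈ s, Polynomial.C (d j) * P j)) w = 0 := by
      rw [map_sum, LinearMap.sum_apply]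
      have hterm : ∀ j ∈ s, (Polynomial.aeval T (Polynomial.C (d j) * P j)) w
          = (Polynomial.aeval T (∏ k ∈ s, (X - C k))) (d j • xf j) := by
        intro j hj
        rw [map_mul, Polynomial.aeval_C, Module.End.mul_apply, Module.algebraMap_end_apply,
          map_smul, hap j hj]
      rw [Finset.sum_congr rfl hterm, ← map_sum, hsum, map_zero]
    have hQ0 : (∑ j ∈ s, Polynomial.C (d j) * P j) ≠ 0 := by
      intro hz
      have heval := congrArg (Polynomial.eval i) hz
      rw [Polynomial.eval_zero, Polynomial.eval_finset_sum] at heval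
      have hterm : ∀ j ∈ s, j ≠ i → (Polynomial.C (d j) * P j).eval i = 0 := by
        intro j hj hji
        rw [eval_mul, eval_C, hP]
        have hzero : (∏ k ∈ s.erase j, (X - C k)).eval i = 0 := by
          rw [Polynomial.eval_prod]
          exact Finset.prod_eq_zero (i := i)
            (Finset.mem_erase.mpr ⟨fun h => hji h.symm, hi⟩)
            (by rw [eval_sub, eval_X, eval_C, sub_self])
        rw [hzero, mul_zero]
      rw [Finset.sum_eq_single i hterm (fun h => absurd hi h)] at heval
      rw [eval_mul, eval_C] at heval
      have hpne : (P i).eval i ≠ 0 := by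
        rw [hP, Polynomial.eval_prod]
        refine Finset.prod_ne_zero_iff.mpr (fun k hk => ?_)
        rw [eval_sub, eval_X, eval_C]
        exact sub_ne_zero.mpr (fun h => (Finset.mem_erase.mp hk).1 h.symm)
      rcases mul_eq_zero.mp heval with h | h
      · exact hdne h
      · exact hpne h
    exact hw0 (hinj _ hQ0 (show (Polynomial.aeval T _) w = (Polynomial.aeval T _) 0 by
      rw [h0, map_zero]))
  -- cardinality contradiction
  have hcard : (Cardinal.mk ℂ) ≤ Module.rank ℂ V := hLI.cardinal_le_rank
  let ψ : Uq q m →ₗ[ℂ] V :=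
    { toFun := fun u => u • w
      map_add' := fun a b => add_smul a b w
      map_smul' := fun c u => smul_assoc c u w }
  let φ : FreeAlgebra ℂ UqGen →ₗ[ℂ] V :=
    ψ.comp (RingQuot.mkAlgHom ℂ (UqRel q m)).toLinearMap
  have hsurj : Function.Surjective φ := by
    intro v
    obtain ⟨u, rfl⟩ := hcyc v
    obtain ⟨x, rfl⟩ := RingQuot.mkAlgHom_surjective ℂ (UqRel q m) u
    exact ⟨x, rfl⟩
  have h1 : Module.rank ℂ V ≤ Module.rank ℂ (FreeAlgebra ℂ UqGen) :=
    LinearMap.rank_le_of_surjective φ hsurj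
  have h2 : Module.rank ℂ (FreeAlgebra ℂ UqGen) = Cardinal.mk (FreeMonoid UqGen) :=
    (FreeAlgebra.basisFreeMonoid ℂ UqGen).mk_eq_rank''.symm
  haveI : Countable (FreeMonoid UqGen) :=
    Countable.of_equiv (List UqGen) (FreeMonoid.toList (α := UqGen)).symm
  have h3 : Cardinal.mk (FreeMonoid UqGen) ≤ Cardinal.aleph0 := Cardinal.mk_le_aleph0
  have hfin : Cardinal.mk ℂ ≤ Cardinal.aleph0 := hcard.trans (h1.trans (h2 ▸ h3))
  rw [Cardinal.mk_complex] at hfin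
  exact absurd hfin (not_le.mpr Cardinal.aleph0_lt_continuum)

end ModulePart5

end Stmt17
/-- Let `V` be a Whittaker module for `U_q(f_m(K))` (cyclic, generated
by a Whittaker vector `w` with `Ew = η(E)w`, `e = η(E) ≠ 0`). Then `V` is irreducible
if and only if `V` admits a central character (the Casimir `Ω` acts by a scalar,
equivalently `Z_V` is a maximal ideal of `ℂ[Ω]`); moreover, if `V` is irreducible then
the space of Whittaker vectors of `V` is one-dimensional, i.e. every Whittaker vector
is a scalar multiple of `w`. -/
theorem stmt17 (q : ℂ) (m : ℕ) (hm : 1 ≤ m) (hq0 : q ≠ 0)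
    (hq : ∀ k : ℕ, 0 < k → q ^ k ≠ 1)
    (e : ℂ) (he : e ≠ 0)
    (V : Type) [AddCommGroup V] [Module (Uq q m) V]
    (w : V) (hw0 : w ≠ 0)
    (hw : Egen q m • w = algebraMap ℂ (Uq q m) e • w)
    (hcyc : ∀ v : V, ∃ u : Uq q m, v = u • w) :
    (IsSimpleModule (Uq q m) V ↔
      ∃ χ : ℂ, ∀ v : V, Casimir q m • v = algebraMap ℂ (Uq q m) χ • v) ∧
    (IsSimpleModule (Uq q m) V →
      ∀ v : V, Egen q m • v = algebraMap ℂ (Uq q m) e • v →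
        ∃ c : ℂ, v = algebraMap ℂ (Uq q m) c • w) := by
  letI : Module ℂ V := Module.compHom V (algebraMap ℂ (Uq q m))
  haveI : IsScalarTower ℂ (Uq q m) V :=
    ⟨fun c u v => by
      show (c • u) • v = algebraMap ℂ (Uq q m) c • (u • v)
      rw [Algebra.smul_def, mul_smul]⟩
  haveI : SMulCommClass (Uq q m) ℂ V :=
    ⟨fun u c v => by
      show u • (algebraMap ℂ (Uq q m) c • v) = algebraMap ℂ (Uq q m) c • (u • v)
      rw [← mul_smul, ← mul_smul, Algebra.commutes]⟩
  refine ⟨⟨fun hs => Stmt17.char_of_simple q m V w hq0 hq hm he hw0 hw hcyc hs, ?_⟩, ?_⟩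
  · rintro ⟨χ, hΩ⟩
    exact Stmt17.simple_of_char q m V w hq0 hq he hw0 hw hcyc hΩ
  · intro hs v hv
    obtain ⟨χ, hΩ⟩ := Stmt17.char_of_simple q m V w hq0 hq hm he hw0 hw hcyc hs
    exact Stmt17.whittaker_unique q m V w hq0 hq he hw0 hw hcyc hΩ v hv
end
end

section
/- Let (V, w) be a Whittaker module for U_q(f_m(K)) of type η, and suppose u ∈ U_q(f_m(K)) satisfies u·K^i·w = 0 for all integers i > 0. Then u·w = 0. -/
noncomputable section

section Aux

variable {q : ℂ} {m : ℕ}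

lemma KKinv_eq : Kgen q m * Kinvgen q m = 1 := by
  have h := RingQuot.mkAlgHom_rel ℂ (UqRel.KKinv (q := q) (m := m))
  simpa [Kgen, Kinvgen, map_mul, map_one] using h

lemma KinvK_eq : Kinvgen q m * Kgen q m = 1 := by
  have h := RingQuot.mkAlgHom_rel ℂ (UqRel.KinvK (q := q) (m := m))
  simpa [Kgen, Kinvgen, map_mul, map_one] using h

lemma KE_eq : Kgen q m * Egen q m = q ^ 2 • (Egen q m * Kgen q m) := by
  have h := RingQuot.mkAlgHom_rel ℂ (UqRel.KE (q := q) (m := m))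
  simpa [Kgen, Egen, map_mul, map_smul] using h

lemma KF_eq : Kgen q m * Fgen q m = (q ^ 2)⁻¹ • (Fgen q m * Kgen q m) := by
  have h := RingQuot.mkAlgHom_rel ℂ (UqRel.KF (q := q) (m := m))
  simpa [Kgen, Fgen, map_mul, map_smul] using h

end Aux
def Eig (q : ℂ) (m : ℕ) (c : ℂ) (x : Uq q m) : Prop :=
  Kgen q m * x = c • (x * Kgen q m)

section Aux2

variable {q : ℂ} {m : ℕ}

lemma Eig.zero (c : ℂ) : Eig q m c 0 := by simp [Eig]

lemma Eig.add {c : ℂ} {x y : Uq q m} (hx : Eig q m c x) (hy : Eig q m c y) :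
    Eig q m c (x + y) := by
  unfold Eig at *
  rw [mul_add, hx, hy, add_mul, smul_add]

lemma Eig.mul {c d : ℂ} {x y : Uq q m} (hx : Eig q m c x) (hy : Eig q m d y) :
    Eig q m (c * d) (x * y) := by
  unfold Eig at *
  calc Kgen q m * (x * y) = (Kgen q m * x) * y := by rw [mul_assoc]
    _ = c • (x * (Kgen q m * y)) := by rw [hx, smul_mul_assoc, mul_assoc]
    _ = c • (x * (d • (y * Kgen q m))) := by rw [hy]
    _ = (c * d) • (x * y * Kgen q m) := by
        rw [mul_smul_comm, smul_smul, mul_assoc]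

lemma Eig.smul {c : ℂ} (a : ℂ) {x : Uq q m} (hx : Eig q m c x) : Eig q m c (a • x) := by
  unfold Eig at *
  rw [mul_smul_comm, hx, smul_mul_assoc, smul_comm]

def Dec (q : ℂ) (m : ℕ) (u : Uq q m) : Prop :=
  ∃ s : Finset ℤ, ∃ f : ℤ → Uq q m,
    (∀ n ∈ s, Eig q m ((q ^ 2) ^ n) (f n)) ∧ u = ∑ n ∈ s, f n

lemma Dec.of_eig {x : Uq q m} (n : ℤ) (h : Eig q m ((q ^ 2) ^ n) x) : Dec q m x :=
  ⟨{n}, fun _ => x, by simpa using h, by simp⟩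

lemma Dec.zero : Dec q m 0 := ⟨∅, fun _ => 0, by simp, by simp⟩

lemma Dec.add {x y : Uq q m} (hx : Dec q m x) (hy : Dec q m y) : Dec q m (x + y) := by
  obtain ⟨s, f, hf, rfl⟩ := hx
  obtain ⟨t, g, hg, rfl⟩ := hy
  refine ⟨s ∪ t, fun n => (if n ∈ s then f n else 0) + (if n ∈ t then g n else 0),
    fun n _ => ?_, ?_⟩
  · apply Eig.add
    · split_ifs with h
      · exact hf n h
      · exact Eig.zero _
    · split_ifs with h
      · exact hg n h
      · exact Eig.zero _
  · rw [Finset.sum_add_distrib, Finset.sum_ite_mem, Finset.sum_ite_mem,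
      Finset.union_inter_cancel_left, Finset.union_inter_cancel_right]

lemma Dec.mul (hq0 : q ≠ 0) {x y : Uq q m} (hx : Dec q m x) (hy : Dec q m y) :
    Dec q m (x * y) := by
  obtain ⟨s, f, hf, rfl⟩ := hx
  obtain ⟨t, g, hg, rfl⟩ := hy
  rw [Finset.sum_mul_sum]
  have hq2 : (q : ℂ) ^ 2 ≠ 0 := pow_ne_zero _ hq0
  apply Finset.sum_induction _ (Dec q m) (fun a b ha hb => Dec.add ha hb) Dec.zero
  intro a ha
  apply Finset.sum_induction _ (Dec q m) (fun a b ha hb => Dec.add ha hb) Dec.zero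
  intro b hb
  exact Dec.of_eig (a + b) (by rw [zpow_add₀ hq2]; exact Eig.mul (hf a ha) (hg b hb))

lemma Dec.all (hq0 : q ≠ 0) (u : Uq q m) : Dec q m u := by
  obtain ⟨x, rfl⟩ := RingQuot.mkAlgHom_surjective ℂ (UqRel q m) u
  induction x using FreeAlgebra.induction with
  | grade0 r =>
      refine Dec.of_eig 0 ?_
      simp only [zpow_zero, Eig, one_smul]
      rw [AlgHom.commutes]
      exact (Algebra.commutes r (Kgen q m)).symm ▸ (Algebra.commutes r (Kgen q m))
  | grade1 g =>
      cases g with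
      | E => exact Dec.of_eig 1 (by simpa [Eig, zpow_one, Egen] using KE_eq (q := q) (m := m))
      | F => exact Dec.of_eig (-1) (by simpa [Eig, zpow_neg, zpow_one, Fgen] using KF_eq (q := q) (m := m))
      | K => exact Dec.of_eig 0 (by simp [Eig, Kgen])
      | Kinv =>
          refine Dec.of_eig 0 ?_
          show Kgen q m * Kinvgen q m = ((q^2)^(0:ℤ)) • (Kinvgen q m * Kgen q m)
          rw [KKinv_eq, KinvK_eq, zpow_zero, one_smul]
  | mul a b ha hb => rw [map_mul]; exact Dec.mul hq0 ha hb
  | add a b ha hb => rw [map_add]; exact Dec.add ha hb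

end Aux2
section Aux3

variable {q : ℂ} {m : ℕ}

lemma zpow_q2_inj (hq0 : q ≠ 0) (hq : ∀ k : ℕ, 0 < k → q ^ k ≠ 1) :
    Function.Injective fun n : ℤ => (q ^ 2) ^ n := by
  have hq2 : (q : ℂ) ^ 2 ≠ 0 := pow_ne_zero _ hq0
  have key : ∀ d : ℤ, (q ^ 2) ^ d = 1 → d = 0 := by
    intro d hd
    by_contra hd0
    have hnat : (q ^ 2) ^ (d.natAbs : ℤ) = 1 := by
      rcases Int.natAbs_eq d with h | h
      · rw [← h]; exact hd
      · rw [← neg_neg (d.natAbs : ℤ), ← h, zpow_neg, hd, inv_one]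
    rw [zpow_natCast, ← pow_mul] at hnat
    exact hq (2 * d.natAbs) (by positivity) hnat
  intro a b hab
  simp only at hab
  have : (q ^ 2) ^ (a - b) = 1 := by
    rw [zpow_sub₀ hq2, hab, div_self (zpow_ne_zero _ hq2)]
  have := key _ this
  omega

lemma Eig.pow_swap {c : ℂ} {x : Uq q m} (hc : c ≠ 0) (hx : Eig q m c x) (i : ℕ) :
    x * Kgen q m ^ i = (c⁻¹) ^ i • (Kgen q m ^ i * x) := by
  have hxK : x * Kgen q m = c⁻¹ • (Kgen q m * x) := by
    rw [hx, smul_smul, inv_mul_cancel₀ hc, one_smul]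
  induction i with
  | zero => simp
  | succ i ih =>
      rw [pow_succ, ← mul_assoc, ih, smul_mul_assoc, mul_assoc, hxK,
        mul_smul_comm, smul_smul, ← pow_succ, ← mul_assoc]

lemma KinvK_pow (i : ℕ) : Kinvgen q m ^ i * Kgen q m ^ i = 1 := by
  induction i with
  | zero => simp
  | succ i ih =>
      rw [pow_succ, pow_succ']
      calc Kinvgen q m ^ i * Kinvgen q m * (Kgen q m * Kgen q m ^ i)
          = Kinvgen q m ^ i * (Kinvgen q m * Kgen q m) * Kgen q m ^ i := by noncomm_ring
        _ = 1 := by rw [KinvK_eq, mul_one, ih]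

lemma vandermonde {V : Type} [AddCommGroup V] [Module ℂ V] (s : Finset ℤ) :
    ∀ (μ : ℤ → ℂ) (x : ℤ → V), Set.InjOn μ s → (∀ n ∈ s, μ n ≠ 0) →
      (∀ i : ℕ, 0 < i → ∑ n ∈ s, μ n ^ i • x n = 0) → ∀ n ∈ s, x n = 0 := by
  induction s using Finset.induction_on with
  | empty => simp
  | @insert a t ha ih =>
      intro μ x hinj h0 hsum
      have hxt : ∀ n ∈ t, x n = 0 := by
        have hsum' : ∀ i : ℕ, 0 < i → ∑ n ∈ t, μ n ^ i • ((μ n - μ a) • x n) = 0 := by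
          intro i hi
          have h1 := hsum (i + 1) (by omega)
          rw [Finset.sum_insert ha] at h1
          have h2 := hsum i hi
          rw [Finset.sum_insert ha] at h2
          have h2' : μ a ^ (i + 1) • x a + ∑ n ∈ t, (μ a * μ n ^ i) • x n = 0 := by
            have := congrArg (fun v => μ a • v) h2
            simpa [smul_add, Finset.smul_sum, smul_smul, pow_succ, mul_comm] using this
          have e1 : ∑ n ∈ t, μ n ^ (i + 1) • x n = -(μ a ^ (i + 1) • x a) :=
            eq_neg_of_add_eq_zero_right h1
          have e2 : ∑ n ∈ t, (μ a * μ n ^ i) • x n = -(μ a ^ (i + 1) • x a) :=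
            eq_neg_of_add_eq_zero_right h2'
          calc ∑ n ∈ t, μ n ^ i • ((μ n - μ a) • x n)
              = ∑ n ∈ t, (μ n ^ (i + 1) • x n - (μ a * μ n ^ i) • x n) := by
                apply Finset.sum_congr rfl
                intro n _
                rw [smul_smul, ← sub_smul]
                ring_nf
            _ = 0 := by rw [Finset.sum_sub_distrib, e1, e2, sub_self]
        have hxt' := ih μ (fun n => (μ n - μ a) • x n)
          (hinj.mono (by simp [Finset.subset_insert]))
          (fun n hn => h0 n (Finset.mem_insert_of_mem hn)) hsum'
        intro n hn
        have hne : μ n - μ a ≠ 0 := by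
          refine sub_ne_zero.mpr fun h => ?_
          have : n = a := hinj (Finset.mem_insert_of_mem hn) (Finset.mem_insert_self a t) h
          exact ha (this ▸ hn)
        have := hxt' n hn
        have := congrArg (fun v => (μ n - μ a)⁻¹ • v) this
        simpa [smul_smul, inv_mul_cancel₀ hne] using this
      have hxa : x a = 0 := by
        have h1 := hsum 1 one_pos
        rw [Finset.sum_insert ha, Finset.sum_eq_zero (fun n hn => by rw [hxt n hn, smul_zero]),
          add_zero, pow_one] at h1
        have := congrArg (fun v => (μ a)⁻¹ • v) h1
        simpa [smul_smul, inv_mul_cancel₀ (h0 a (Finset.mem_insert_self a t))] using this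
      intro n hn
      rcases Finset.mem_insert.mp hn with rfl | hn
      · exact hxa
      · exact hxt n hn

end Aux3

/-- Let `(V, w)` be a Whittaker module for `U_q(f_m(K))` of type `η`
(`e = η(E) ≠ 0`), and suppose `u ∈ U_q(f_m(K))` satisfies `u·K^i·w = 0` for all
integers `i > 0`. Then `u·w = 0`. -/
theorem stmt18 (q : ℂ) (m : ℕ) (hm : 1 ≤ m) (hq0 : q ≠ 0)
    (hq : ∀ k : ℕ, 0 < k → q ^ k ≠ 1)
    (e : ℂ) (he : e ≠ 0)
    (V : Type) [AddCommGroup V] [Module (Uq q m) V]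
    (w : V) (hw0 : w ≠ 0)
    (hw : Egen q m • w = algebraMap ℂ (Uq q m) e • w)
    (hcyc : ∀ v : V, ∃ u : Uq q m, v = u • w)
    (u : Uq q m) (hu : ∀ i : ℕ, 0 < i → u • (Kgen q m ^ i • w) = 0) :
    u • w = 0 := by
  letI : Module ℂ V := Module.compHom V (algebraMap ℂ (Uq q m))
  have hsc : ∀ (c : ℂ) (v : V), c • v = algebraMap ℂ (Uq q m) c • v := fun _ _ => rfl
  have hcomm : ∀ (x : Uq q m) (c : ℂ) (v : V), x • (c • v) = c • (x • v) := by
    intro x c v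
    rw [hsc, hsc, ← mul_smul, ← mul_smul, Algebra.commutes]
  have htower : ∀ (c : ℂ) (x : Uq q m) (v : V), (c • x) • v = c • (x • v) := by
    intro c x v
    rw [hsc, Algebra.smul_def, mul_smul]
  have hq2 : (q : ℂ) ^ 2 ≠ 0 := pow_ne_zero _ hq0
  obtain ⟨s, f, hf, hdecomp⟩ := Dec.all hq0 u
  subst hdecomp
  set μ : ℤ → ℂ := fun n => ((q ^ 2) ^ n)⁻¹ with hμ
  have hμ0 : ∀ n ∈ s, μ n ≠ 0 := fun n _ => inv_ne_zero (zpow_ne_zero _ hq2)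
  have hμinj : Set.InjOn μ s := by
    intro a _ b _ hab
    exact zpow_q2_inj hq0 hq (inv_injective hab)
  have hvan : ∀ i : ℕ, 0 < i → ∑ n ∈ s, μ n ^ i • (f n • w) = 0 := by
    intro i hi
    have h1 : (∑ n ∈ s, f n) • (Kgen q m ^ i • w) = 0 := hu i hi
    have h2 : (∑ n ∈ s, f n) • (Kgen q m ^ i • w)
        = Kgen q m ^ i • ∑ n ∈ s, μ n ^ i • (f n • w) := by
      rw [Finset.sum_smul, Finset.smul_sum]
      apply Finset.sum_congr rfl
      intro n hn
      rw [← mul_smul, (hf n hn).pow_swap (zpow_ne_zero _ hq2) i, htower, mul_smul,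
        hcomm]
    rw [h2] at h1
    have h3 := congrArg (fun v => Kinvgen q m ^ i • v) h1
    simpa [← mul_smul, KinvK_pow] using h3
  have hzero := vandermonde s μ (fun n => f n • w) hμinj hμ0 hvan
  rw [Finset.sum_smul, Finset.sum_eq_zero hzero]
end
end

section
/- Let (V, w) be an irreducible Whittaker module for U_q(f_m(K)) admitting a central character. Then the set {K^i w : i ∈ Z} is a C-basis of V. -/
noncomputable section

namespace Stmt19

variable (q : ℂ) (m : ℕ)

theorem rel_KE : Kgen q m * Egen q m = q ^ 2 • (Egen q m * Kgen q m) := by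
  have h := RingQuot.mkAlgHom_rel ℂ (UqRel.KE (q := q) (m := m))
  simpa only [map_mul, map_smul, Egen, Kgen] using h

theorem rel_KF : Kgen q m * Fgen q m = (q ^ 2)⁻¹ • (Fgen q m * Kgen q m) := by
  have h := RingQuot.mkAlgHom_rel ℂ (UqRel.KF (q := q) (m := m))
  simpa only [map_mul, map_smul, Fgen, Kgen] using h

theorem rel_KKinv : Kgen q m * Kinvgen q m = 1 := by
  have h := RingQuot.mkAlgHom_rel ℂ (UqRel.KKinv (q := q) (m := m))
  simpa only [map_mul, map_one, Kgen, Kinvgen] using h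

theorem rel_KinvK : Kinvgen q m * Kgen q m = 1 := by
  have h := RingQuot.mkAlgHom_rel ℂ (UqRel.KinvK (q := q) (m := m))
  simpa only [map_mul, map_one, Kgen, Kinvgen] using h

theorem rel_EF : Egen q m * Fgen q m - Fgen q m * Egen q m
    = (q - q⁻¹)⁻¹ • (Kgen q m ^ m - Kinvgen q m ^ m) := by
  have h := RingQuot.mkAlgHom_rel ℂ (UqRel.EF (q := q) (m := m))
  simpa only [map_mul, map_sub, map_smul, map_pow, Egen, Fgen, Kgen, Kinvgen] using h

theorem rel_EK (hq0 : q ≠ 0) :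
    Egen q m * Kgen q m = (q ^ 2)⁻¹ • (Kgen q m * Egen q m) := by
  rw [rel_KE, smul_smul, inv_mul_cancel₀ (pow_ne_zero 2 hq0), one_smul]

theorem rel_FK (hq0 : q ≠ 0) :
    Fgen q m * Kgen q m = q ^ 2 • (Kgen q m * Fgen q m) := by
  rw [rel_KF, smul_smul, mul_inv_cancel₀ (pow_ne_zero 2 hq0), one_smul]

theorem rel_EKinv : Egen q m * Kinvgen q m = q ^ 2 • (Kinvgen q m * Egen q m) := by
  calc Egen q m * Kinvgen q m
      = Kinvgen q m * Kgen q m * Egen q m * Kinvgen q m := by rw [rel_KinvK, one_mul]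
    _ = Kinvgen q m * (Kgen q m * Egen q m) * Kinvgen q m := by
        rw [mul_assoc (Kinvgen q m)]
    _ = Kinvgen q m * (q ^ 2 • (Egen q m * Kgen q m)) * Kinvgen q m := by rw [rel_KE]
    _ = q ^ 2 • (Kinvgen q m * Egen q m * (Kgen q m * Kinvgen q m)) := by
        rw [mul_smul_comm, smul_mul_assoc, ← mul_assoc (Kinvgen q m), mul_assoc _ (Kgen q m)]
    _ = q ^ 2 • (Kinvgen q m * Egen q m) := by rw [rel_KKinv, mul_one]

theorem rel_FKinv : Fgen q m * Kinvgen q m = (q ^ 2)⁻¹ • (Kinvgen q m * Fgen q m) := by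
  calc Fgen q m * Kinvgen q m
      = Kinvgen q m * Kgen q m * Fgen q m * Kinvgen q m := by rw [rel_KinvK, one_mul]
    _ = Kinvgen q m * (Kgen q m * Fgen q m) * Kinvgen q m := by
        rw [mul_assoc (Kinvgen q m)]
    _ = Kinvgen q m * ((q ^ 2)⁻¹ • (Fgen q m * Kgen q m)) * Kinvgen q m := by rw [rel_KF]
    _ = (q ^ 2)⁻¹ • (Kinvgen q m * Fgen q m * (Kgen q m * Kinvgen q m)) := by
        rw [mul_smul_comm, smul_mul_assoc, ← mul_assoc (Kinvgen q m), mul_assoc _ (Kgen q m)]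
    _ = (q ^ 2)⁻¹ • (Kinvgen q m * Fgen q m) := by rw [rel_KKinv, mul_one]

def Ku : (Uq q m)ˣ := ⟨Kgen q m, Kinvgen q m, rel_KKinv q m, rel_KinvK q m⟩

theorem Kzpow_eq (n : ℤ) : Kzpow q m n = ((Ku q m ^ n : (Uq q m)ˣ) : Uq q m) := by
  rcases n with k | k
  · rw [Int.ofNat_eq_coe, zpow_natCast, Units.val_pow_eq_pow_val]
    unfold Kzpow lpow
    rw [if_pos (Int.ofNat_nonneg k), Int.toNat_natCast]
    rfl
  · rw [zpow_negSucc, ← inv_pow, Units.val_pow_eq_pow_val]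
    unfold Kzpow lpow
    rw [if_neg (by simp [Int.negSucc_eq]; omega), show (-Int.negSucc k).toNat = k + 1 by simp [Int.negSucc_eq]]
    rfl

theorem Kzpow_add (a b : ℤ) : Kzpow q m (a + b) = Kzpow q m a * Kzpow q m b := by
  rw [Kzpow_eq, Kzpow_eq, Kzpow_eq, zpow_add, Units.val_mul]

theorem Kzpow_zero : Kzpow q m 0 = 1 := by
  rw [Kzpow_eq, zpow_zero, Units.val_one]

theorem Kzpow_one : Kzpow q m 1 = Kgen q m := by
  rw [Kzpow_eq, zpow_one]; rfl

theorem Kzpow_neg_one : Kzpow q m (-1) = Kinvgen q m := by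
  rw [Kzpow_eq, zpow_neg, zpow_one]; rfl

theorem Kzpow_natCast (k : ℕ) : Kzpow q m (k : ℤ) = Kgen q m ^ k := by
  rw [Kzpow_eq, zpow_natCast, Units.val_pow_eq_pow_val]; rfl

theorem Kzpow_neg_natCast (k : ℕ) : Kzpow q m (-(k : ℤ)) = Kinvgen q m ^ k := by
  rw [Kzpow_eq, zpow_neg, zpow_natCast, ← inv_pow, Units.val_pow_eq_pow_val]; rfl

theorem E_Kpow (hq0 : q ≠ 0) (n : ℕ) :
    Egen q m * Kgen q m ^ n = ((q ^ 2) ^ n)⁻¹ • (Kgen q m ^ n * Egen q m) := by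
  induction n with
  | zero => simp
  | succ n ih =>
    rw [pow_succ, ← mul_assoc, ih, smul_mul_assoc, mul_assoc, rel_EK q m hq0,
      mul_smul_comm, smul_smul, ← mul_inv, ← mul_assoc, ← pow_succ, ← pow_succ]

theorem E_Kinvpow (n : ℕ) :
    Egen q m * Kinvgen q m ^ n = (q ^ 2) ^ n • (Kinvgen q m ^ n * Egen q m) := by
  induction n with
  | zero => simp
  | succ n ih =>
    rw [pow_succ, ← mul_assoc, ih, smul_mul_assoc, mul_assoc, rel_EKinv q m,
      mul_smul_comm, smul_smul, ← mul_assoc, ← pow_succ, ← pow_succ]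

theorem F_Kpow (hq0 : q ≠ 0) (n : ℕ) :
    Fgen q m * Kgen q m ^ n = (q ^ 2) ^ n • (Kgen q m ^ n * Fgen q m) := by
  induction n with
  | zero => simp
  | succ n ih =>
    rw [pow_succ, ← mul_assoc, ih, smul_mul_assoc, mul_assoc, rel_FK q m hq0,
      mul_smul_comm, smul_smul, ← mul_assoc, ← pow_succ, ← pow_succ]

theorem F_Kinvpow (n : ℕ) :
    Fgen q m * Kinvgen q m ^ n = ((q ^ 2) ^ n)⁻¹ • (Kinvgen q m ^ n * Fgen q m) := by
  induction n with
  | zero => simp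
  | succ n ih =>
    rw [pow_succ, ← mul_assoc, ih, smul_mul_assoc, mul_assoc, rel_FKinv q m,
      mul_smul_comm, smul_smul, ← mul_inv, ← mul_assoc, ← pow_succ, ← pow_succ]

theorem E_Kzpow (hq0 : q ≠ 0) (n : ℤ) :
    Egen q m * Kzpow q m n = ((q ^ 2) ^ n)⁻¹ • (Kzpow q m n * Egen q m) := by
  rcases n with k | k
  · rw [Int.ofNat_eq_coe, Kzpow_natCast, zpow_natCast, E_Kpow q m hq0]
  · have h1 : Kzpow q m (Int.negSucc k) = Kinvgen q m ^ (k + 1) := by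
      rw [Int.negSucc_eq, show (-((k : ℤ) + 1)) = -(((k + 1 : ℕ) : ℤ)) by push_cast; ring,
        Kzpow_neg_natCast]
    rw [h1, zpow_negSucc, inv_inv, E_Kinvpow]

theorem F_Kzpow (hq0 : q ≠ 0) (n : ℤ) :
    Fgen q m * Kzpow q m n = (q ^ 2) ^ n • (Kzpow q m n * Fgen q m) := by
  rcases n with k | k
  · rw [Int.ofNat_eq_coe, Kzpow_natCast, zpow_natCast, F_Kpow q m hq0]
  · have h1 : Kzpow q m (Int.negSucc k) = Kinvgen q m ^ (k + 1) := by
      rw [Int.negSucc_eq, show (-((k : ℤ) + 1)) = -(((k + 1 : ℕ) : ℤ)) by push_cast; ring,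
        Kzpow_neg_natCast]
    rw [h1, zpow_negSucc, F_Kinvpow]

end Stmt19
/-- Let `(V, w)` be an irreducible Whittaker module for `U_q(f_m(K))`
admitting a central character (i.e. the Casimir `Ω` acts by a scalar). Then the set
`{K^i w : i ∈ ℤ}` is a `ℂ`-basis of `V`. -/
theorem stmt19 (q : ℂ) (m : ℕ) (hm : 1 ≤ m) (hq0 : q ≠ 0)
    (hq : ∀ k : ℕ, 0 < k → q ^ k ≠ 1)
    (e : ℂ) (he : e ≠ 0)
    (V : Type) [AddCommGroup V] [Module ℂ V] [Module (Uq q m) V]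
    [IsScalarTower ℂ (Uq q m) V]
    (w : V) (hw0 : w ≠ 0)
    (hw : Egen q m • w = algebraMap ℂ (Uq q m) e • w)
    (hcyc : ∀ v : V, ∃ u : Uq q m, v = u • w)
    (hirr : IsSimpleModule (Uq q m) V)
    (hχ : ∃ χ : ℂ, ∀ v : V, Casimir q m • v = algebraMap ℂ (Uq q m) χ • v) :
    ∃ b : Module.Basis ℤ ℂ V, ∀ i : ℤ, b i = Kzpow q m i • w := by
  classical
  obtain ⟨χ, hχ⟩ := hχ
  -- basic scalar facts
  have hq2 : (q ^ 2 : ℂ) ≠ 0 := pow_ne_zero 2 hq0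
  have halg : ∀ (c : ℂ) (v : V), (algebraMap ℂ (Uq q m) c) • v = c • v := by
    intro c v
    rw [Algebra.algebraMap_eq_smul_one, smul_assoc, one_smul]
  have hsc : ∀ (c : ℂ) (u : Uq q m) (v : V), u • (c • v) = c • (u • v) := by
    intro c u v
    have h1 : c • v = (c • (1 : Uq q m)) • v := by rw [smul_assoc, one_smul]
    rw [h1, ← mul_smul, mul_smul_comm, mul_one, smul_assoc]
  have hw' : Egen q m • w = e • w := hw.trans (halg e w)
  -- the candidate basis family
  set f : ℤ → V := fun i => Kzpow q m i • w with hf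
  have hf0 : f 0 = w := by rw [hf]; simp [Stmt19.Kzpow_zero, one_smul]
  have hKzf : ∀ i j : ℤ, Kzpow q m i • f j = f (i + j) := by
    intro i j
    show Kzpow q m i • (Kzpow q m j • w) = Kzpow q m (i + j) • w
    rw [← mul_smul, ← Stmt19.Kzpow_add]
  have hfne : ∀ i, f i ≠ 0 := by
    intro i hcon
    have h1 : Kzpow q m (-i) • f i = w := by
      rw [hKzf, neg_add_cancel, hf0]
    rw [hcon, smul_zero] at h1
    exact hw0 h1.symm
  -- the span
  set W : Submodule ℂ V := Submodule.span ℂ (Set.range f) with hW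
  have hfW : ∀ i, f i ∈ W := fun i => Submodule.subset_span ⟨i, rfl⟩
  have hwW : w ∈ W := hf0 ▸ hfW 0
  -- eigen-action of E
  have hEfi : ∀ i, Egen q m • f i = (e * ((q ^ 2 : ℂ) ^ i)⁻¹) • f i := by
    intro i
    show Egen q m • (Kzpow q m i • w) = _
    rw [← mul_smul, Stmt19.E_Kzpow q m hq0 i, smul_assoc, mul_smul, hw', hsc, smul_smul,
      mul_comm]
  -- action of K and K⁻¹
  have hKfi : ∀ i, Kgen q m • f i = f (1 + i) := by
    intro i
    rw [← Stmt19.Kzpow_one q m, hKzf]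
  have hKinvfi : ∀ i, Kinvgen q m • f i = f (-1 + i) := by
    intro i
    rw [← Stmt19.Kzpow_neg_one q m, hKzf]
  -- action of F on w, via the central character
  set α : ℂ := ((q ^ (2 * m) - 1) * (q - q⁻¹))⁻¹ * q ^ (2 * m) with hα
  set β : ℂ := ((q ^ (2 * m) - 1) * (q - q⁻¹))⁻¹ with hβ
  have hKm : Kgen q m ^ m = Kzpow q m (m : ℤ) := (Stmt19.Kzpow_natCast q m m).symm
  have hKim : Kinvgen q m ^ m = Kzpow q m (-(m : ℤ)) := (Stmt19.Kzpow_neg_natCast q m m).symm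
  have hFw : Fgen q m • w = e⁻¹ • (χ • w - α • f (m : ℤ) - β • f (-(m : ℤ))) := by
    have h0 : Casimir q m • w = χ • w := (hχ w).trans (halg χ w)
    have h1 : Casimir q m • w
        = e • (Fgen q m • w) + α • f (m : ℤ) + β • f (-(m : ℤ)) := by
      show (Fgen q m * Egen q m + α • Kgen q m ^ m + β • Kinvgen q m ^ m) • w = _
      rw [add_smul, add_smul, mul_smul, hw', hsc, smul_assoc, smul_assoc, hKm, hKim]
    have h2 : e • (Fgen q m • w) = χ • w - α • f (m : ℤ) - β • f (-(m : ℤ)) := by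
      rw [← h0, h1]; abel
    rw [← h2, smul_smul, inv_mul_cancel₀ he, one_smul]
  -- closure of W under the action of generators
  have hstep : ∀ g : Uq q m, (∀ i : ℤ, g • f i ∈ W) → ∀ v ∈ W, g • v ∈ W := by
    intro g hg v hv
    induction hv using Submodule.span_induction with
    | mem x hx => obtain ⟨i, rfl⟩ := hx; exact hg i
    | zero => rw [smul_zero]; exact W.zero_mem
    | add x y _ _ hx hy => rw [smul_add]; exact W.add_mem hx hy
    | smul c x _ hx => rw [hsc]; exact W.smul_mem c hx
  have hKzW : ∀ (j : ℤ), ∀ v ∈ W, Kzpow q m j • v ∈ W := fun j =>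
    hstep _ (fun i => (hKzf j i) ▸ hfW (j + i))
  -- action of F on f i
  have hFfi : ∀ i, Fgen q m • f i ∈ W := by
    intro i
    have h1 : Fgen q m • f i = (q ^ 2 : ℂ) ^ i • (Kzpow q m i • (Fgen q m • w)) := by
      show Fgen q m • (Kzpow q m i • w) = _
      rw [← mul_smul, Stmt19.F_Kzpow q m hq0 i, smul_assoc, mul_smul]
    rw [h1, hFw]
    refine W.smul_mem _ (hKzW i _ ?_)
    exact W.smul_mem _ (sub_mem (sub_mem (W.smul_mem _ hwW) (W.smul_mem _ (hfW _)))
      (W.smul_mem _ (hfW _)))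
  have hcl : ∀ x : FreeAlgebra ℂ UqGen, ∀ v ∈ W,
      (RingQuot.mkAlgHom ℂ (UqRel q m) x) • v ∈ W := by
    intro x
    induction x using FreeAlgebra.induction with
    | grade0 c =>
      intro v hv
      rw [AlgHom.commutes, halg]
      exact W.smul_mem c hv
    | grade1 g =>
      cases g with
      | E => exact hstep (Egen q m) (fun i => (hEfi i) ▸ W.smul_mem _ (hfW i))
      | F => exact hstep (Fgen q m) hFfi
      | K => exact hstep (Kgen q m) (fun i => (hKfi i) ▸ hfW (1 + i))
      | Kinv => exact hstep (Kinvgen q m) (fun i => (hKinvfi i) ▸ hfW (-1 + i))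
    | mul a b ha hb =>
      intro v hv
      rw [map_mul, mul_smul]
      exact ha _ (hb v hv)
    | add a b ha hb =>
      intro v hv
      rw [map_add, add_smul]
      exact W.add_mem (ha v hv) (hb v hv)
  -- spanning
  have hspan : Submodule.span ℂ (Set.range f) = ⊤ := by
    rw [eq_top_iff]
    intro v _
    obtain ⟨u, rfl⟩ := hcyc v
    obtain ⟨x, hx⟩ := RingQuot.mkAlgHom_surjective ℂ (UqRel q m) u
    rw [← hx]
    exact hcl x w hwW
  -- linear independence via distinct eigenvalues of E
  have hq2z : ∀ k : ℤ, ((q ^ 2 : ℂ)) ^ k = 1 → k = 0 := by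
    intro k hk
    by_contra h
    have hq2pow : ∀ n : ℕ, 0 < n → ((q ^ 2 : ℂ)) ^ n ≠ 1 := by
      intro n hn hcon
      exact hq (2 * n) (by omega) (by rw [pow_mul]; exact hcon)
    rcases lt_or_gt_of_ne h with hlt | hgt
    · have h2 : ((q ^ 2 : ℂ)) ^ (-k) = 1 := by rw [zpow_neg, hk, inv_one]
      have hk' : (-k) = (((-k).toNat : ℕ) : ℤ) := by omega
      rw [hk', zpow_natCast] at h2
      exact hq2pow _ (by omega) h2
    · have hk' : k = ((k.toNat : ℕ) : ℤ) := by omega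
      rw [hk', zpow_natCast] at hk
      exact hq2pow _ (by omega) hk
  have hμinj : Function.Injective (fun i : ℤ => e * ((q ^ 2 : ℂ) ^ i)⁻¹) := by
    intro i j hij
    simp only at hij
    have h1 : ((q ^ 2 : ℂ) ^ i)⁻¹ = ((q ^ 2 : ℂ) ^ j)⁻¹ := mul_left_cancel₀ he hij
    have h2 : (q ^ 2 : ℂ) ^ i = (q ^ 2 : ℂ) ^ j := by
      rw [← inv_inv ((q ^ 2 : ℂ) ^ i), h1, inv_inv]
    have h3 : (q ^ 2 : ℂ) ^ (i - j) = 1 := by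
      rw [zpow_sub₀ hq2, h2, div_self (zpow_ne_zero j hq2)]
    have := hq2z (i - j) h3
    omega
  set T : V →ₗ[ℂ] V :=
    { toFun := fun v => Egen q m • v
      map_add' := fun a b => smul_add (Egen q m) a b
      map_smul' := fun c v => hsc c (Egen q m) v } with hT
  have heig : ∀ i, Module.End.HasEigenvector T (e * ((q ^ 2 : ℂ) ^ i)⁻¹) (f i) := by
    intro i
    exact ⟨Module.End.mem_eigenspace_iff.mpr (hEfi i), hfne i⟩
  have hli : LinearIndependent ℂ f :=
    Module.End.eigenvectors_linearIndependent' T _ hμinj f heig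
  refine ⟨Module.Basis.mk hli (by rw [hspan]), ?_⟩
  intro i
  rw [Module.Basis.mk_apply]
end
end
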